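/- arXiv:2109.01111 — 6 statements merged into one kernel-verified Lean document; each statement's English description precedes it below -/
import Mathlib

section
/- Let s be an element of Thompson's group V given by partitions {C(w_1),…,C(w_n)}, {C(z_1),…,C(z_n)} with s(w_i·x) = z_i·x, and let k(s) = max_i max(|w_i|, |z_i| − |w_i|). Define μ_N(x) = (1/N) ∑_{j=1}^N δ_{x_{[1,j]}0^∞} ∈ Prob(D). Then for every N > 2·k(s) and every x ∈ {0,1}^ℕ, ‖ s·μ_N(x) − μ_N(s x) ‖_1 ≤ 4·k(s)/N, where s·μ denotes the pushforward of μ under s. -/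
open Filter Topology

/-- Cantor space `{0,1}^ℕ`. -/
abbrev Cantor := ℕ → Bool

/-- `trunc x j = x_{[1,j]}0^∞`: agrees with `x` on the first `j` coordinates, `0` afterwards. -/
def trunc (x : Cantor) (j : ℕ) : Cantor := fun n => if n < j then x n else false

/-- `D`: the eventually-zero sequences. -/
def EvZero (x : Cantor) : Prop := ∃ k, ∀ l ≥ k, x l = false

/-- The cylinder set `C(w)` of sequences beginning with the finite word `w`. -/
def cyl (w : List Bool) : Set Cantor := {x | ∀ i, (h : i < w.length) → x i = w.get ⟨i, h⟩}

/-- Concatenation `w·x` of a finite word with an infinite sequence. -/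
def wordApp (w : List Bool) (x : Cantor) : Cantor :=
  fun n => if h : n < w.length then w.get ⟨n, h⟩ else x (n - w.length)

/-- `s` is given by the table `(w, z)`: the cylinders of the `w i` (resp. `z i`) partition
Cantor space, and `s (w i · x) = z i · x` for all `i, x`. -/
def IsTable (s : Cantor ≃ₜ Cantor) (n : ℕ) (w z : Fin n → List Bool) : Prop :=
  (∀ x : Cantor, ∃! i, x ∈ cyl (w i)) ∧ (∀ x : Cantor, ∃! i, x ∈ cyl (z i)) ∧
  (∀ i x, s (wordApp (w i) x) = wordApp (z i) x)

/-- Membership in Thompson's group `V` (tabular form). -/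
def InV (s : Cantor ≃ₜ Cantor) : Prop := ∃ n w z, IsTable s n w z

/-- `k(s)` for a table. -/
def kTable (n : ℕ) (w z : Fin n → List Bool) : ℕ :=
  Finset.univ.sup fun i => max (w i).length ((z i).length - (w i).length)

open Classical in
/-- `μ_N(x)(y) = (1/N) · #{1 ≤ j ≤ N : x_{[1,j]}0^∞ = y}`. -/
noncomputable def muN (N : ℕ) (x : Cantor) (y : Cantor) : ℝ :=
  (N : ℝ)⁻¹ * ((Finset.Icc 1 N).filter fun j => trunc x j = y).card


section Aux

open Finset

private lemma stmt2_aux (s : Cantor ≃ₜ Cantor) (n : ℕ) (w z : Fin n → List Bool)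
    (hs : IsTable s n w z) (N : ℕ) (hN : N > 2 * kTable n w z) (x : Cantor) :
    (∑' y : Cantor, |muN N x (s.symm y) - muN N (s x) y|) ≤ 4 * (kTable n w z : ℝ) / N := by
  classical
  obtain ⟨hw, hz, hsw⟩ := hs
  obtain ⟨i, hxi, -⟩ := hw x
  set k := kTable n w z with hk
  set a := (w i).length with hadef
  set b := (z i).length with hbdef
  have hsup : max (w i).length ((z i).length - (w i).length) ≤ k := by
    rw [hk, kTable]
    exact Finset.le_sup (f := fun i => max (w i).length ((z i).length - (w i).length))
      (Finset.mem_univ i)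
  have ha : a ≤ k := le_trans (le_max_left _ _) hsup
  have hba : b ≤ a + k := by
    have : b - a ≤ k := (le_max_right (w i).length ((z i).length - (w i).length)).trans hsup
    omega
  have hN0 : 0 < N := by omega
  -- the shifted tail of x
  set u : Cantor := fun m => x (m + a) with hu
  have hxu : x = wordApp (w i) u := by
    funext m
    simp only [wordApp]
    split
    · exact hxi m ‹_›
    · simp only [hu]
      congr 1
      omega
  have hsx : s x = wordApp (z i) u := by rw [hxu]; exact hsw i u
  -- key geometric identity
  have key : ∀ j, a ≤ j → s (trunc x j) = trunc (s x) (j - a + b) := by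
    intro j hj
    have h1 : trunc x j = wordApp (w i) (trunc u (j - a)) := by
      funext m
      simp only [trunc, wordApp, hu]
      by_cases hm : m < a
      · have hmj : m < j := by omega
        simp only [if_pos hmj, dif_pos hm]
        rw [dif_pos (show m < (w i).length from hm)]; exact hxi m hm
      · rw [dif_neg hm]
        by_cases hmj : m < j
        · rw [if_pos hmj, if_pos (by omega : m - a < j - a)]
          congr 1
          omega
        · rw [if_neg hmj, if_neg (by omega : ¬ m - a < j - a)]
    have h2 : trunc (wordApp (z i) u) (j - a + b) = wordApp (z i) (trunc u (j - a)) := by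
      funext m
      simp only [trunc, wordApp]
      by_cases hm : m < b
      · rw [dif_pos hm, dif_pos hm, if_pos (by omega : m < j - a + b)]
      · rw [dif_neg hm, dif_neg hm]
        by_cases hmj : m < j - a + b
        · rw [if_pos hmj, if_pos (by omega : m - b < j - a)]
        · rw [if_neg hmj, if_neg (by omega : ¬ m - b < j - a)]
    rw [h1, hsw i, hsx, h2]
  -- counting setup
  set F : ℕ → Cantor := fun j => s (trunc x j) with hF
  set G : ℕ → Cantor := fun j => trunc (s x) j with hG
  set I : Finset ℕ := Finset.Icc 1 N with hI
  set J : Finset ℕ := I.filter (fun j => a + 1 ≤ j ∧ j - a + b ≤ N) with hJ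
  set T : Finset Cantor := I.image F ∪ I.image G with hT
  set f : Cantor → ℕ := fun y => (I.filter (fun j => F j = y)).card with hf
  set g : Cantor → ℕ := fun y => (I.filter (fun j => G j = y)).card with hg
  set f' : Cantor → ℕ := fun y => (J.filter (fun j => F j = y)).card with hf'
  have hJI : J ⊆ I := Finset.filter_subset _ _
  -- rewrite the summand
  have hsummand : ∀ y : Cantor, |muN N x (s.symm y) - muN N (s x) y|
      = (N : ℝ)⁻¹ * |(f y : ℝ) - (g y : ℝ)| := by
    intro y
    have hfilt : (I.filter fun j => trunc x j = s.symm y) = I.filter (fun j => F j = y) := by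
      apply Finset.filter_congr
      intro j _
      simp only [hF]
      constructor
      · rintro h; rw [h]; exact s.apply_symm_apply y
      · rintro h; rw [← h]; exact (s.symm_apply_apply _).symm
    simp only [muN, hfilt, hf, hg, hG, hI]
    rw [← mul_sub, abs_mul, abs_of_nonneg (by positivity : (0:ℝ) ≤ (N:ℝ)⁻¹)]
    rw [hI] at hfilt; simp only [hfilt]
  -- vanishing outside T
  have hvanish : ∀ y ∉ T, |muN N x (s.symm y) - muN N (s x) y| = 0 := by
    intro y hy
    rw [hsummand y]
    have hfy : f y = 0 := by
      rw [hf, Finset.card_eq_zero, Finset.filter_eq_empty_iff]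
      intro j hj hFj
      exact hy (Finset.mem_union_left _ (Finset.mem_image.2 ⟨j, hj, hFj⟩))
    have hgy : g y = 0 := by
      rw [hg, Finset.card_eq_zero, Finset.filter_eq_empty_iff]
      intro j hj hGj
      exact hy (Finset.mem_union_right _ (Finset.mem_image.2 ⟨j, hj, hGj⟩))
    rw [hfy, hgy]
    simp
  rw [tsum_eq_sum hvanish]
  -- pointwise bounds
  have hf'f : ∀ y, f' y ≤ f y := fun y =>
    Finset.card_le_card (Finset.filter_subset_filter _ hJI)
  have hf'g : ∀ y, f' y ≤ g y := by
    intro y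
    apply Finset.card_le_card_of_injOn (fun j => j - a + b)
    · intro j hj
      simp only [hJ, Finset.mem_coe, Finset.mem_filter, hI, Finset.mem_Icc] at hj
      obtain ⟨⟨⟨hj1, hjN⟩, hja, hjb⟩, hFj⟩ := hj
      simp only [hg, Finset.mem_coe, Finset.mem_filter, hI, Finset.mem_Icc]
      refine ⟨⟨by omega, hjb⟩, ?_⟩
      show trunc (s x) (j - a + b) = y
      rw [← key j (by omega)]
      exact hFj
    · intro j1 hj1 j2 hj2 hEq
      simp only [hJ, Finset.mem_coe, Finset.mem_filter] at hj1 hj2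
      dsimp only at hEq
      omega
  -- fiberwise counting
  have hsumf : ∑ y ∈ T, f y = N := by
    have := Finset.card_eq_sum_card_fiberwise
      (f := F) (s := I) (t := T)
      (fun j hj => Finset.mem_union_left _ (Finset.mem_image.2 ⟨j, hj, rfl⟩))
    rw [hI, Nat.card_Icc] at this
    simpa using this.symm
  have hsumg : ∑ y ∈ T, g y = N := by
    have := Finset.card_eq_sum_card_fiberwise
      (f := G) (s := I) (t := T)
      (fun j hj => Finset.mem_union_right _ (Finset.mem_image.2 ⟨j, hj, rfl⟩))
    rw [hI, Nat.card_Icc] at this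
    simpa using this.symm
  have hsumf' : ∑ y ∈ T, f' y = J.card :=
    (Finset.card_eq_sum_card_fiberwise
      (f := F) (s := J) (t := T)
      (fun j hj => Finset.mem_union_left _ (Finset.mem_image.2 ⟨j, hJI hj, rfl⟩))).symm
  -- cardinality of J
  have hJcard : N ≤ J.card + 2 * k := by
    have hsub : Finset.Icc (a+1) (N - k) ⊆ J := by
      intro j hj
      rw [Finset.mem_Icc] at hj
      simp only [hJ, Finset.mem_filter, hI, Finset.mem_Icc]
      omega
    have := Finset.card_le_card hsub
    rw [Nat.card_Icc] at this
    omega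
  -- combine
  have hbound : ∑ y ∈ T, |(f y : ℝ) - (g y : ℝ)| ≤ 2 * (2 * k) := by
    calc ∑ y ∈ T, |(f y : ℝ) - (g y : ℝ)|
        ≤ ∑ y ∈ T, (((f y : ℝ) - f' y) + ((g y : ℝ) - f' y)) := by
          apply Finset.sum_le_sum
          intro y _
          have h1 : (f' y : ℝ) ≤ f y := by exact_mod_cast hf'f y
          have h2 : (f' y : ℝ) ≤ g y := by exact_mod_cast hf'g y
          rw [abs_sub_le_iff]
          constructor <;> linarith
      _ = ((N : ℝ) - J.card) + ((N : ℝ) - J.card) := by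
          rw [Finset.sum_add_distrib, Finset.sum_sub_distrib, Finset.sum_sub_distrib,
            ← Nat.cast_sum, ← Nat.cast_sum, ← Nat.cast_sum, hsumf, hsumg, hsumf']
      _ ≤ 2 * (2 * k) := by
          have : (N : ℝ) ≤ (J.card : ℝ) + 2 * k := by exact_mod_cast hJcard
          linarith
  calc ∑ y ∈ T, |muN N x (s.symm y) - muN N (s x) y|
      = (N : ℝ)⁻¹ * ∑ y ∈ T, |(f y : ℝ) - (g y : ℝ)| := by
        rw [Finset.mul_sum]
        exact Finset.sum_congr rfl fun y _ => hsummand y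
    _ ≤ (N : ℝ)⁻¹ * (2 * (2 * k)) := by
        apply mul_le_mul_of_nonneg_left hbound (by positivity)
    _ = 4 * (k : ℝ) / N := by
        field_simp
        ring

end Aux

/-- for `s ∈ V` with table `(w, z)` and `N > 2 k(s)`,
`‖s·μ_N(x) − μ_N(s x)‖₁ ≤ 4 k(s) / N` for every `x`, where `(s·μ)(d) = μ(s⁻¹ d)`. -/
theorem stmt2 (s : Cantor ≃ₜ Cantor) (n : ℕ) (w z : Fin n → List Bool)
    (hs : IsTable s n w z) (N : ℕ) (hN : N > 2 * kTable n w z) (x : Cantor) :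
    (∑' y : Cantor, |muN N x (s.symm y) - muN N (s x) y|) ≤ 4 * (kTable n w z : ℝ) / N := by
  exact stmt2_aux s n w z hs N hN x
end

section
/- There exists a sequence of continuous maps μ_N : {0,1}^ℕ → Prob(D) such that for every element s of Thompson's group V, lim_{N→∞} sup_{x ∈ {0,1}^ℕ} ‖ s·μ_N(x) − μ_N(s x) ‖_1 = 0. -/
open Filter Topology

/-!
`μ_N(x)` is the uniform average of the point masses at the truncations `x_{[1,j]}0^∞`,
`1 ≤ j ≤ N`. If `s ∈ V` acts on the cylinder containing `x` by replacing the prefix `w` by `z`,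
then for `j ≥ |w|` it maps the `j`-th truncation of `x` to the `(j - |w| + |z|)`-th truncation
of `s x`. Hence `s·μ_N(x)` and `μ_N(s x)` share all but `O(k(s))` of their `N` atoms, and
`‖s·μ_N(x) − μ_N(s x)‖₁ ≤ 4 k(s) / N` uniformly in `x`.
-/

open Finset

section CardFilter

variable {ι κ α : Type*} [DecidableEq α]

lemma hasSum_card_filter_eq (S : Finset ι) (a : ι → α) :
    HasSum (fun y => (#{j ∈ S | a j = y} : ℝ)) #S := by
  rw [card_eq_sum_card_image a S, Nat.cast_sum]
  refine hasSum_sum_of_ne_finset_zero fun y hy => ?_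
  rw [Nat.cast_eq_zero, card_eq_zero, filter_eq_empty_iff]
  exact fun j hj hjy => hy (hjy ▸ mem_image_of_mem a hj)

lemma card_filter_eq_add_card_sdiff [DecidableEq ι] {G S : Finset ι} (hG : G ⊆ S) (a : ι → α)
    (y : α) :
    #{j ∈ S | a j = y} = #{j ∈ G | a j = y} + #{j ∈ S \ G | a j = y} := by
  rw [← card_union_of_disjoint (disjoint_filter_filter disjoint_sdiff), ← filter_union,
    union_sdiff_of_subset hG]

lemma card_filter_image_eq [DecidableEq κ] {G : Finset ι} {σ : ι → κ} {a : ι → α} {b : κ → α}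
    (hσ : Set.InjOn σ G) (hab : ∀ j ∈ G, a j = b (σ j)) (y : α) :
    #{t ∈ G.image σ | b t = y} = #{j ∈ G | a j = y} := by
  rw [filter_image, card_image_of_injOn (hσ.mono (filter_subset _ _))]
  exact congrArg card (filter_congr fun j hj => by rw [hab j hj])

lemma tsum_abs_sub_card_filter_le [DecidableEq ι] [DecidableEq κ] {S G : Finset ι} {T : Finset κ}
    {σ : ι → κ} {a : ι → α} {b : κ → α} (hG : G ⊆ S) (hσ : Set.InjOn σ G) (hσT : G.image σ ⊆ T)
    (hab : ∀ j ∈ G, a j = b (σ j)) :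
    ∑' y, |(#{j ∈ S | a j = y} : ℝ) - #{t ∈ T | b t = y}| ≤ #S + #T - 2 * #G := by
  have hpoint : ∀ y, |(#{j ∈ S | a j = y} : ℝ) - #{t ∈ T | b t = y}|
      ≤ #{j ∈ S \ G | a j = y} + #{t ∈ T \ G.image σ | b t = y} := fun y => by
    rw [card_filter_eq_add_card_sdiff hG, card_filter_eq_add_card_sdiff hσT,
      card_filter_image_eq hσ hab]
    push_cast
    rw [add_sub_add_left_eq_sub]
    exact (abs_sub _ _).trans_eq (by rw [Nat.abs_cast, Nat.abs_cast])
  have hsum := (hasSum_card_filter_eq (S \ G) a).add (hasSum_card_filter_eq (T \ G.image σ) b)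
  calc _ ≤ ((#(S \ G) + #(T \ G.image σ) : ℕ) : ℝ) :=
        Nat.cast_add (R := ℝ) _ _ ▸ (Summable.tsum_le_tsum hpoint
          (.of_nonneg_of_le (fun _ => abs_nonneg _) hpoint hsum.summable) hsum.summable).trans_eq
          hsum.tsum_eq
    _ = #S + #T - 2 * #G := by
        rw [card_sdiff_of_subset hG, card_sdiff_of_subset hσT, card_image_of_injOn hσ]
        push_cast [card_le_card hG, card_image_of_injOn hσ ▸ card_le_card hσT]
        ring

end CardFilter

lemma trunc_trunc_of_le {j N : ℕ} (h : j ≤ N) (x : Cantor) : trunc (trunc x N) j = trunc x j := by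
  funext n
  by_cases hn : n < j
  · simp [trunc, hn, hn.trans_le h]
  · simp [trunc, hn]

lemma evZero_trunc (x : Cantor) (j : ℕ) : EvZero (trunc x j) :=
  ⟨j, fun _ hl => if_neg (Nat.not_lt.mpr hl)⟩

/-- `trunc · j` only reads the first `j` coordinates, which vary over a finite discrete space. -/
lemma isLocallyConstant_trunc (j : ℕ) : IsLocallyConstant fun x : Cantor => trunc x j := by
  have hfactor : (fun x : Cantor => trunc x j) =
      (fun r : Fin j → Bool => fun n => if h : n < j then r ⟨n, h⟩ else false) ∘
        fun x n => x n := by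
    funext x n
    simp [trunc, dite_eq_ite]
  rw [hfactor]
  exact (IsLocallyConstant.of_discrete _).comp_continuous
    (continuous_pi fun n => continuous_apply _)

lemma trunc_wordApp (w : List Bool) (x : Cantor) (m : ℕ) :
    trunc (wordApp w x) (w.length + m) = wordApp w (trunc x m) := by
  funext n
  by_cases h : n < w.length
  · simp [trunc, wordApp, h, show n < w.length + m by omega]
  · by_cases h2 : n < w.length + m
    · simp [trunc, wordApp, h, h2, show n - w.length < m by omega]
    · simp [trunc, wordApp, h, h2, show ¬(n - w.length < m) by omega]

lemma wordApp_shift_of_mem_cyl {w : List Bool} {x : Cantor} (hx : x ∈ cyl w) :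
    wordApp w (fun n => x (n + w.length)) = x := by
  funext n
  simp only [wordApp]
  split_ifs with h
  · exact (hx n h).symm
  · congr 1; omega

lemma IsTable.apply_trunc {s : Cantor ≃ₜ Cantor} {n : ℕ} {w z : Fin n → List Bool}
    (hs : IsTable s n w z) {i : Fin n} {x : Cantor} (hx : x ∈ cyl (w i)) {j : ℕ}
    (hj : (w i).length ≤ j) :
    s (trunc x j) = trunc (s x) (j - (w i).length + (z i).length) := by
  set x' : Cantor := fun m => x (m + (w i).length)
  have hx' : wordApp (w i) x' = x := wordApp_shift_of_mem_cyl hx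
  have htrunc : trunc x j = wordApp (w i) (trunc x' (j - (w i).length)) := by
    rw [← trunc_wordApp, hx', Nat.add_sub_cancel' hj]
  rw [htrunc, hs.2.2, ← hx', hs.2.2, add_comm _ (z i).length, trunc_wordApp]

section EmpiricalMeasure

-- The instance `muN` was defined with, so that the counting lemmas above rewrite its filters.
open Classical

lemma muN_nonneg (N : ℕ) (x y : Cantor) : 0 ≤ muN N x y := by
  unfold muN
  positivity

lemma muN_eq_zero_of_not_evZero {y : Cantor} (hy : ¬ EvZero y) (N : ℕ) (x : Cantor) :
    muN N x y = 0 := by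
  have hempty : {j ∈ Icc 1 N | trunc x j = y} = ∅ :=
    filter_eq_empty_iff.mpr fun j _ hj => hy (hj ▸ evZero_trunc x j)
  simp [muN, hempty]

lemma tsum_muN {N : ℕ} (hN : N ≠ 0) (x : Cantor) : ∑' y, muN N x y = 1 := by
  simp only [muN]
  rw [tsum_mul_left, (hasSum_card_filter_eq (Icc 1 N) (trunc x)).tsum_eq, Nat.card_Icc,
    Nat.add_sub_cancel, inv_mul_cancel₀ (Nat.cast_ne_zero.mpr hN)]

lemma muN_trunc (N : ℕ) (x y : Cantor) : muN N (trunc x N) y = muN N x y := by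
  unfold muN
  congr 3
  exact filter_congr fun j hj => by rw [trunc_trunc_of_le (mem_Icc.mp hj).2]

lemma continuous_muN (N : ℕ) (y : Cantor) : Continuous fun x => muN N x y := by
  have hfactor : (fun x => muN N x y) = (fun x' => muN N x' y) ∘ fun x => trunc x N :=
    funext fun x => (muN_trunc N x y).symm
  rw [hfactor]
  exact ((isLocallyConstant_trunc N).comp _).continuous

lemma le_kTable {n : ℕ} (w z : Fin n → List Bool) (i : Fin n) :
    (w i).length ≤ kTable n w z ∧ (z i).length - (w i).length ≤ kTable n w z :=
  max_le_iff.mp (le_sup (f := fun i => max (w i).length ((z i).length - (w i).length))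
    (mem_univ i))

lemma tsum_abs_sub_muN_le {s : Cantor ≃ₜ Cantor} {n : ℕ} {w z : Fin n → List Bool}
    (hs : IsTable s n w z) (N : ℕ) (x : Cantor) :
    ∑' y, |muN N x (s.symm y) - muN N (s x) y| ≤ 4 * kTable n w z / N := by
  obtain ⟨i, hxi, -⟩ := hs.1 x
  set k := kTable n w z
  obtain ⟨hwk, hzk⟩ := le_kTable w z i
  set σ : ℕ → ℕ := fun j => j - (w i).length + (z i).length
  set G := Ioc k (N - k)
  have hG : G ⊆ Icc 1 N := fun j hj => by
    simp only [G, mem_Ioc, mem_Icc] at hj ⊢; omega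
  have hσ : Set.InjOn σ G := fun j hj j' hj' h => by
    simp only [G, coe_Ioc, Set.mem_Ioc, σ] at hj hj' h; omega
  have hσG : G.image σ ⊆ Icc 1 N := image_subset_iff.mpr fun j hj => by
    simp only [G, mem_Ioc, mem_Icc, σ] at hj ⊢; omega
  have hcount := tsum_abs_sub_card_filter_le (a := fun j => s (trunc x j))
    (b := fun j => trunc (s x) j) hG hσ hσG
    fun j hj => hs.apply_trunc hxi (hwk.trans (mem_Ioc.mp hj).1.le)
  rw [Nat.card_Icc, Nat.add_sub_cancel] at hcount
  have hG_card : (N : ℝ) ≤ #G + 2 * k := by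
    have : N ≤ #G + 2 * k := by simp only [G, Nat.card_Ioc]; omega
    exact_mod_cast this
  have hsummand : ∀ y, |muN N x (s.symm y) - muN N (s x) y| =
      (N : ℝ)⁻¹ *
        |(#{j ∈ Icc 1 N | s (trunc x j) = y} : ℝ) - #{j ∈ Icc 1 N | trunc (s x) j = y}| :=
    fun y => by
      simp only [muN, Homeomorph.eq_symm_apply, ← mul_sub, abs_mul, abs_inv, Nat.abs_cast]
  calc ∑' y, |muN N x (s.symm y) - muN N (s x) y|
      = (N : ℝ)⁻¹ * ∑' y, |(#{j ∈ Icc 1 N | s (trunc x j) = y} : ℝ)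
          - #{j ∈ Icc 1 N | trunc (s x) j = y}| := by
        rw [← tsum_mul_left]; exact tsum_congr hsummand
    _ ≤ (N : ℝ)⁻¹ * (4 * k) := by
        gcongr
        linarith
    _ = 4 * k / N := inv_mul_eq_div _ _

end EmpiricalMeasure

/-- there is a sequence of continuous maps `μ_N : {0,1}^ℕ → Prob(D)` such that
for every `s` in Thompson's group `V`, `sup_x ‖s·μ_N(x) − μ_N(s x)‖₁ → 0`. -/
theorem stmt3 :
    ∃ μ : ℕ → Cantor → Cantor → ℝ,
      (∀ N x y, 0 ≤ μ N x y) ∧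
      (∀ N x y, ¬ EvZero y → μ N x y = 0) ∧
      (∀ N x, ∑' y : Cantor, μ N x y = 1) ∧
      (∀ N y, Continuous fun x => μ N x y) ∧
      (∀ s : Cantor ≃ₜ Cantor, InV s →
        Tendsto (fun N => ⨆ x : Cantor, ∑' y : Cantor, |μ N x (s.symm y) - μ N (s x) y|)
          atTop (𝓝 0)) := by
  refine ⟨fun N => muN (N + 1), fun N => muN_nonneg _,
    fun N x y hy => muN_eq_zero_of_not_evZero hy _ x, fun N => tsum_muN N.succ_ne_zero,
    fun N => continuous_muN _, ?_⟩
  rintro s ⟨n, w, z, hs⟩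
  have hbound : ∀ N : ℕ, ⨆ x, ∑' y, |muN (N + 1) x (s.symm y) - muN (N + 1) (s x) y|
      ≤ 4 * kTable n w z / ((N + 1 : ℕ) : ℝ) := fun N =>
    Real.iSup_le (fun x => tsum_abs_sub_muN_le hs (N + 1) x) (by positivity)
  exact squeeze_zero (fun N => Real.iSup_nonneg fun x => tsum_nonneg fun y => abs_nonneg _)
    hbound ((tendsto_const_div_atTop_nhds_zero_nat _).comp (tendsto_add_atTop_nat 1))
end

section
/- Let Γ be a discrete group acting on a discrete Γ-set S, and let Λ ≤ Γ be a subgroup. Suppose there exists a net (equivalently, for each finite E ⊆ Γ, F ⊆ S and ε > 0, a function) μ : S → Prob(Γ/Λ) with ‖ g·μ(x) − μ(g x) ‖_1 < ε for all g ∈ E, x ∈ F. Then there exists a map ψ : S → (ℓ^∞(Γ/Λ))^* such that each ψ(s) is a state (positive, unital linear functional) and ψ(g s) = g·ψ(s) for all g ∈ Γ, s ∈ S. -/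
open Filter Topology

/-- `μ` is an `ℓ¹` probability vector on `ι`. -/
def IsProbVec {ι : Type*} (μ : ι → ℝ) : Prop := (∀ i, 0 ≤ μ i) ∧ ∑' i, μ i = 1

/-- A state on `ℓ^∞(ι)`: a unital positive linear functional. -/
def IsState {ι : Type*} (m : lp (fun _ : ι => ℝ) ⊤ →ₗ[ℝ] ℝ) : Prop :=
  m 1 = 1 ∧ ∀ f : lp (fun _ : ι => ℝ) ⊤, (∀ i, 0 ≤ f i) → 0 ≤ m f

lemma IsProbVec.summable {ι : Type*} {μ : ι → ℝ} (h : IsProbVec μ) : Summable μ := by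
  by_contra hs
  have := tsum_eq_zero_of_not_summable hs
  rw [h.2] at this
  norm_num at this

lemma pairing_summable {ι : Type*} {μ : ι → ℝ} (h : IsProbVec μ)
    (f : lp (fun _ : ι => ℝ) ⊤) : Summable (fun c => μ c * f c) := by
  refine (h.summable.mul_right ‖f‖).of_norm_bounded (fun c => ?_)
  rw [norm_mul, Real.norm_of_nonneg (h.1 c)]
  exact mul_le_mul_of_nonneg_left (lp.norm_apply_le_norm ENNReal.top_ne_zero f c) (h.1 c)

lemma pairing_abs_le {ι : Type*} {μ : ι → ℝ} (h : IsProbVec μ)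
    (f : lp (fun _ : ι => ℝ) ⊤) : |∑' c, μ c * f c| ≤ ‖f‖ := by
  calc |∑' c, μ c * f c| ≤ ∑' c, |μ c * f c| := by
        have hs : Summable fun c => ‖μ c * f c‖ := by
          simpa only [Real.norm_eq_abs] using (pairing_summable h f).abs
        simpa only [Real.norm_eq_abs] using norm_tsum_le_tsum_norm hs
    _ ≤ ∑' c, μ c * ‖f‖ := by
        refine Summable.tsum_le_tsum (fun c => ?_) (pairing_summable h f).abs
          (h.summable.mul_right ‖f‖)
        rw [abs_mul, abs_of_nonneg (h.1 c)]
        exact mul_le_mul_of_nonneg_left (lp.norm_apply_le_norm ENNReal.top_ne_zero f c) (h.1 c)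
    _ = ‖f‖ := by rw [tsum_mul_right, h.2, one_mul]

/-- if for all finite `E ⊆ Γ`, `F ⊆ S`, `ε > 0` there is
`μ : S → Prob(Γ/Λ)` with `‖g·μ(x) − μ(gx)‖₁ < ε` on `E, F`, then there is
`ψ : S → ℓ^∞(Γ/Λ)^*` with each `ψ(s)` a state and `ψ(g s) = g·ψ(s)`
(i.e. `ψ(g s)(f) = ψ(s)(f ∘ (g • ·))`). -/
theorem stmt4 {Γ S : Type*} [Group Γ] [MulAction Γ S] (Λ : Subgroup Γ)
    (h : ∀ ε > (0 : ℝ), ∀ (E : Finset Γ) (F : Finset S),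
      ∃ μ : S → (Γ ⧸ Λ) → ℝ, (∀ x, IsProbVec (μ x)) ∧
        ∀ g ∈ E, ∀ x ∈ F, ∑' c : Γ ⧸ Λ, |μ x (g⁻¹ • c) - μ (g • x) c| < ε) :
    ∃ ψ : S → (lp (fun _ : Γ ⧸ Λ => ℝ) ⊤ →ₗ[ℝ] ℝ),
      (∀ x, IsState (ψ x)) ∧
      ∀ (g : Γ) (x : S) (f f' : lp (fun _ : Γ ⧸ Λ => ℝ) ⊤),
        (∀ c, f' c = f (g • c)) → ψ (g • x) f = ψ x f' := by
  classical
  set I := Finset Γ × Finset S × ℕ with hI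
  -- choose the almost-equivariant probability vectors
  have hch : ∀ i : I, ∃ μ : S → (Γ ⧸ Λ) → ℝ, (∀ x, IsProbVec (μ x)) ∧
      ∀ g ∈ i.1, ∀ x ∈ i.2.1,
        ∑' c : Γ ⧸ Λ, |μ x (g⁻¹ • c) - μ (g • x) c| < 1 / (i.2.2 + 1) := by
    intro i
    exact h (1 / (i.2.2 + 1)) (by positivity) i.1 i.2.1
  choose μ hμprob hμeq using hch
  set P : I → S → lp (fun _ : Γ ⧸ Λ => ℝ) ⊤ → ℝ :=
    fun i x f => ∑' c, μ i x c * f c with hP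
  have hPabs : ∀ i x f, |P i x f| ≤ ‖f‖ := fun i x f => pairing_abs_le (hμprob i x) f
  -- the ultrafilter
  obtain ⟨U, hU⟩ := Filter.exists_ultrafilter_le (atTop : Filter I)
  -- existence of limits along U
  have key : ∀ x f, ∃ l : ℝ, Tendsto (fun i => P i x f) (U : Filter I) (𝓝 l) := by
    intro x f
    have hc : IsCompact (Set.Icc (-‖f‖) ‖f‖) := isCompact_Icc
    have hle : (U.map (fun i => P i x f) : Filter ℝ) ≤ 𝓟 (Set.Icc (-‖f‖) ‖f‖) := by
      rw [le_principal_iff]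
      refine Filter.mem_map.2 (Filter.Eventually.of_forall ?_)
      intro i
      exact abs_le.1 (hPabs i x f)
    obtain ⟨a, _, ha⟩ := hc.ultrafilter_le_nhds (U.map (fun i => P i x f)) hle
    exact ⟨a, ha⟩
  choose L hL using key
  -- linearity
  have hadd : ∀ x f g, L x (f + g) = L x f + L x g := by
    intro x f g
    have h1 : Tendsto (fun i => P i x (f + g)) (U : Filter I) (𝓝 (L x f + L x g)) := by
      have : (fun i => P i x (f + g)) = fun i => P i x f + P i x g := by
        funext i
        simp only [hP]
        rw [← Summable.tsum_add (pairing_summable (hμprob i x) f) (pairing_summable (hμprob i x) g)]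
        refine tsum_congr (fun c => ?_)
        rw [lp.coeFn_add, Pi.add_apply, mul_add]
      rw [this]
      exact (hL x f).add (hL x g)
    exact tendsto_nhds_unique (hL x (f + g)) h1
  have hsmul : ∀ x (r : ℝ) f, L x (r • f) = r * L x f := by
    intro x r f
    have h1 : Tendsto (fun i => P i x (r • f)) (U : Filter I) (𝓝 (r * L x f)) := by
      have : (fun i => P i x (r • f)) = fun i => r * P i x f := by
        funext i
        simp only [hP]
        rw [← tsum_mul_left]
        refine tsum_congr (fun c => ?_)
        rw [lp.coeFn_smul, Pi.smul_apply, smul_eq_mul]; ring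
      rw [this]
      exact (hL x f).const_mul r
    exact tendsto_nhds_unique (hL x (r • f)) h1
  refine ⟨fun x =>
    { toFun := L x
      map_add' := hadd x
      map_smul' := hsmul x }, ?_, ?_⟩
  · -- states
    intro x
    constructor
    · -- unital
      have h1 : Tendsto (fun i => P i x 1) (U : Filter I) (𝓝 1) := by
        have : (fun i => P i x 1) = fun _ => (1 : ℝ) := by
          funext i
          simp only [hP]
          have : ∀ c : Γ ⧸ Λ, ((1 : lp (fun _ : Γ ⧸ Λ => ℝ) ⊤) : (Γ ⧸ Λ) → ℝ) c = 1 := by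
            intro c; rw [lp.infty_coeFn_one]; rfl
          calc ∑' c, μ i x c * ((1 : lp (fun _ : Γ ⧸ Λ => ℝ) ⊤) : (Γ ⧸ Λ) → ℝ) c
              = ∑' c, μ i x c := tsum_congr (fun c => by rw [this c, mul_one])
            _ = 1 := (hμprob i x).2
        rw [this]
        exact tendsto_const_nhds
      exact tendsto_nhds_unique (hL x 1) h1
    · -- positivity
      intro f hf
      refine ge_of_tendsto (hL x f) (Filter.Eventually.of_forall (fun i => ?_))
      simp only [hP]
      exact tsum_nonneg (fun c => mul_nonneg ((hμprob i x).1 c) (hf c))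
  · -- equivariance
    intro g x f f' hf'
    -- P i x f' as a reindexed sum
    have hre : ∀ i : I, P i x f' = ∑' c, μ i x (g⁻¹ • c) * f c := by
      intro i
      simp only [hP]
      have := (MulAction.toPerm g : Equiv.Perm (Γ ⧸ Λ)).tsum_eq
        (fun c => μ i x (g⁻¹ • c) * f c)
      rw [← this]
      refine tsum_congr (fun c => ?_)
      have h1 : (MulAction.toPerm g : Equiv.Perm (Γ ⧸ Λ)) c = g • c := rfl
      rw [h1, hf' c, inv_smul_smul]
    have hsum' : ∀ i : I, Summable (fun c : Γ ⧸ Λ => μ i x (g⁻¹ • c)) := by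
      intro i
      have := (hμprob i x).summable
      exact this.comp_injective (MulAction.injective (g⁻¹ : Γ))
    -- approximate equality bound
    have hbound : ∀ᶠ i : I in atTop,
        |P i (g • x) f - P i x f'| ≤ ‖f‖ * (1 / (i.2.2 + 1)) := by
      have hmem : {i : I | ({g}, {x}, 0) ≤ i} ∈ (atTop : Filter I) :=
        Filter.mem_atTop _
      filter_upwards [hmem] with i hi
      obtain ⟨hg, hx, -⟩ := hi
      have hg' : g ∈ i.1 := hg (Finset.mem_singleton_self g)
      have hx' : x ∈ i.2.1 := hx (Finset.mem_singleton_self x)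
      have heq := hμeq i g hg' x hx'
      rw [hre i]
      have hsub : Summable (fun c : Γ ⧸ Λ => |μ i x (g⁻¹ • c) - μ i (g • x) c|) :=
        ((hsum' i).sub (hμprob i (g • x)).summable).abs
      calc |P i (g • x) f - ∑' c, μ i x (g⁻¹ • c) * f c|
          = |∑' c, (μ i (g • x) c - μ i x (g⁻¹ • c)) * f c| := by
            simp only [hP]
            rw [← Summable.tsum_sub (pairing_summable (hμprob i (g • x)) f)
              ((hsum' i).mul_right _ |>.of_norm_bounded (fun c => by
                rw [norm_mul, Real.norm_of_nonneg ((hμprob i x).1 _)]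
                exact mul_le_mul_of_nonneg_left
                  (lp.norm_apply_le_norm ENNReal.top_ne_zero f c) ((hμprob i x).1 _)))]
            congr 1
            exact tsum_congr (fun c => by ring)
        _ ≤ ∑' c, |(μ i (g • x) c - μ i x (g⁻¹ • c)) * f c| := by
            have hs : Summable fun c => ‖(μ i (g • x) c - μ i x (g⁻¹ • c)) * f c‖ := by
              refine (hsub.mul_right ‖f‖).of_norm_bounded (fun c => ?_)
              simp only [Real.norm_eq_abs, abs_abs, abs_mul]
              rw [abs_sub_comm]
              exact mul_le_mul_of_nonneg_left
                (lp.norm_apply_le_norm ENNReal.top_ne_zero f c) (abs_nonneg _)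
            simpa only [Real.norm_eq_abs] using norm_tsum_le_tsum_norm hs
        _ ≤ ∑' c, |μ i x (g⁻¹ • c) - μ i (g • x) c| * ‖f‖ := by
            refine Summable.tsum_le_tsum (fun c => ?_) ?_ (hsub.mul_right ‖f‖)
            · rw [abs_mul, abs_sub_comm]
              exact mul_le_mul_of_nonneg_left
                (lp.norm_apply_le_norm ENNReal.top_ne_zero f c) (abs_nonneg _)
            · refine (hsub.mul_right ‖f‖).of_norm_bounded (fun c => ?_)
              simp only [Real.norm_eq_abs, abs_abs, abs_mul]
              rw [abs_sub_comm]
              exact mul_le_mul_of_nonneg_left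
                (lp.norm_apply_le_norm ENNReal.top_ne_zero f c) (abs_nonneg _)
        _ = (∑' c, |μ i x (g⁻¹ • c) - μ i (g • x) c|) * ‖f‖ := tsum_mul_right
        _ ≤ ‖f‖ * (1 / (i.2.2 + 1)) := by
            rw [mul_comm]
            exact mul_le_mul_of_nonneg_left heq.le (norm_nonneg f)
    -- the bound tends to 0 along U
    have htendn : Tendsto (fun i : I => ‖f‖ * (1 / ((i.2.2 : ℝ) + 1)))
        (U : Filter I) (𝓝 0) := by
      have h2 : Tendsto (fun i : I => i.2.2) (atTop : Filter I) atTop := by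
        refine tendsto_atTop.2 (fun n => ?_)
        filter_upwards [Filter.mem_atTop ((⊥ : Finset Γ), (⊥ : Finset S), n)] with i hi
        exact hi.2.2
      have h3 : Tendsto (fun n : ℕ => ‖f‖ * (1 / ((n : ℝ) + 1))) atTop (𝓝 0) := by
        have := (tendsto_one_div_add_atTop_nhds_zero_nat).const_mul ‖f‖
        simpa only [mul_zero] using this
      exact (h3.comp h2).mono_left hU
    have hdiff : Tendsto (fun i => P i (g • x) f - P i x f') (U : Filter I) (𝓝 0) := by
      refine squeeze_zero_norm' ?_ htendn
      exact (hU hbound)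
    have h1 : Tendsto (fun i => P i (g • x) f) (U : Filter I) (𝓝 (0 + L x f')) := by
      have : (fun i => P i (g • x) f)
          = fun i => (P i (g • x) f - P i x f') + P i x f' := by funext i; ring
      rw [this]
      exact hdiff.add (hL x f')
    simpa using tendsto_nhds_unique (hL (g • x) f) h1
end

section
/- Let Γ be a discrete group acting on a set S and Λ ≤ Γ. Suppose there exists ψ : S → (ℓ^∞(Γ/Λ))^* with each ψ(s) a state and ψ(g s) = g·ψ(s) for all g, s. Then for every ε > 0 and all finite sets E ⊆ Γ, F ⊆ S, there exists μ : S → Prob(Γ/Λ) such that ‖ g·μ(x) − μ(g x) ‖_1 < ε for every g ∈ E and x ∈ F. -/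
open Filter Topology
open scoped ENNReal

private lemma lp_single_apply' {ι : Type*} [DecidableEq ι] (p : ℝ≥0∞) (i j : ι) (a : ℝ) :
    (lp.single (E := fun _ : ι => ℝ) p i a : ι → ℝ) j = if j = i then a else 0 := by
  by_cases h : j = i
  · subst h; simp [lp.single_apply_self]
  · simp [lp.single_apply_ne p i _ h, h]

set_option maxHeartbeats 1600000 in
/-- if there is `ψ : S → ℓ^∞(Γ/Λ)^*` with each `ψ(s)` a state and
`ψ(g s) = g·ψ(s)`, then for all `ε > 0` and finite `E ⊆ Γ`, `F ⊆ S` there is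
`μ : S → Prob(Γ/Λ)` with `‖g·μ(x) − μ(g x)‖₁ < ε` for `g ∈ E`, `x ∈ F`. -/
theorem stmt5 {Γ S : Type*} [Group Γ] [MulAction Γ S] (Λ : Subgroup Γ)
    (ψ : S → (lp (fun _ : Γ ⧸ Λ => ℝ) ⊤ →ₗ[ℝ] ℝ))
    (hstate : ∀ x, IsState (ψ x))
    (hequiv : ∀ (g : Γ) (x : S) (f f' : lp (fun _ : Γ ⧸ Λ => ℝ) ⊤),
      (∀ c, f' c = f (g • c)) → ψ (g • x) f = ψ x f') :
    ∀ ε > (0 : ℝ), ∀ (E : Finset Γ) (F : Finset S),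
      ∃ μ : S → (Γ ⧸ Λ) → ℝ, (∀ x, IsProbVec (μ x)) ∧
        ∀ g ∈ E, ∀ x ∈ F, ∑' c : Γ ⧸ Λ, |μ x (g⁻¹ • c) - μ (g • x) c| < ε := by
  classical
  intro ε hε E F
  by_cases hEF : (E ×ˢ F).Nonempty
  swap
  · refine ⟨fun _ c => if c = QuotientGroup.mk 1 then 1 else 0,
      fun x => ⟨fun c => by dsimp only; split <;> norm_num, tsum_ite_eq _ _⟩, ?_⟩
    intro g hg x hx
    exact absurd ⟨(g, x), Finset.mem_product.mpr ⟨hg, hx⟩⟩ hEF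
  obtain ⟨⟨g₀, x₀⟩, hp₀⟩ := hEF
  have hx₀ : x₀ ∈ F := (Finset.mem_product.mp hp₀).2
  haveI : Fact ((1 : ℝ≥0∞) ≤ 1) := ⟨le_refl _⟩
  set K := ↥(E ×ˢ F) with hK
  set D : (S → Γ ⧸ Λ) → (K → lp (fun _ : Γ ⧸ Λ => ℝ) 1) := fun i p =>
    lp.single 1 ((↑p : Γ × S).1 • i (↑p : Γ × S).2) 1 -
      lp.single 1 (i ((↑p : Γ × S).1 • (↑p : Γ × S).2)) 1 with hDdef
  have hD : ∀ i (p : K) c, (D i p : (Γ ⧸ Λ) → ℝ) c =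
      (if c = (↑p : Γ × S).1 • i (↑p : Γ × S).2 then 1 else 0)
        - (if c = i ((↑p : Γ × S).1 • (↑p : Γ × S).2) then 1 else 0) := by
    intro i p c
    rw [hDdef]
    simp only [lp.coeFn_sub, Pi.sub_apply, lp_single_apply']
  set C := convexHull ℝ (Set.range D) with hC
  by_cases h0 : (0 : K → lp (fun _ : Γ ⧸ Λ => ℝ) 1) ∈ closure C
  · -- extraction of an almost invariant probability vector
    obtain ⟨v, hvC, hvn⟩ := Metric.mem_closure_iff.mp h0 ε hε
    simp only [dist_zero_left] at hvn
    rw [hC, convexHull_eq] at hvC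
    obtain ⟨J, t, w, z, hw0, hw1, hz, hcm⟩ := hvC
    rw [Finset.centerMass_eq_of_sum_1 _ _ hw1] at hcm
    set iF : J → S → Γ ⧸ Λ := fun j =>
      if h : ∃ i, D i = z j then h.choose else fun _ => QuotientGroup.mk 1 with hiFdef
    have hiF : ∀ j ∈ t, D (iF j) = z j := by
      intro j hj
      have h : ∃ i, D i = z j := hz j hj
      rw [hiFdef]
      simp only [dif_pos h]
      exact h.choose_spec
    refine ⟨fun x c => ∑ j ∈ t, w j * (if c = iF j x then 1 else 0), fun x => ?_, ?_⟩
    · constructor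
      · intro c
        exact Finset.sum_nonneg fun j hj => mul_nonneg (hw0 j hj) (by split <;> norm_num)
      · have hs : HasSum (fun c => ∑ j ∈ t, w j * (if c = iF j x then 1 else 0))
            (∑ j ∈ t, w j * 1) :=
          hasSum_sum fun j _ => (hasSum_ite_eq _ _).mul_left _
        simpa [mul_one, hw1] using hs.tsum_eq
    · intro g hg x hx
      set p : K := ⟨(g, x), Finset.mem_product.mpr ⟨hg, hx⟩⟩ with hp
      have hpt : ∀ c, (∑ j ∈ t, w j * (if g⁻¹ • c = iF j x then 1 else 0))
          - (∑ j ∈ t, w j * (if c = iF j (g • x) then 1 else 0))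
          = (v p : (Γ ⧸ Λ) → ℝ) c := by
        intro c
        have h1 : (v p : (Γ ⧸ Λ) → ℝ) c = ∑ j ∈ t, w j * ((z j p : (Γ ⧸ Λ) → ℝ) c) := by
          rw [← hcm]
          simp only [Finset.sum_apply, lp.coeFn_sum, Pi.smul_apply, lp.coeFn_smul,
            smul_eq_mul]
        rw [h1]
        have h2 : ∀ j ∈ t, w j * ((z j p : (Γ ⧸ Λ) → ℝ) c)
            = w j * ((if c = g • iF j x then 1 else 0) - (if c = iF j (g • x) then 1 else 0)) := by
          intro j hj
          rw [← hiF j hj, hD]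
        rw [Finset.sum_congr rfl h2]
        simp only [mul_sub, Finset.sum_sub_distrib]
        congr 1
        refine Finset.sum_congr rfl fun j hj => ?_
        congr 1
        simp only [inv_smul_eq_iff]
      have h3 : ∑' c : Γ ⧸ Λ, |(∑ j ∈ t, w j * (if g⁻¹ • c = iF j x then 1 else 0))
          - (∑ j ∈ t, w j * (if c = iF j (g • x) then 1 else 0))| = ‖v p‖ := by
        rw [lp.norm_eq_tsum_rpow (by norm_num) (v p)]
        simp only [ENNReal.toReal_one, Real.rpow_one, one_div_one]
        refine tsum_congr fun c => ?_
        rw [hpt c, Real.norm_eq_abs]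
      rw [h3]
      exact lt_of_le_of_lt (norm_le_pi_norm v p) hvn
  · -- separation: contradiction with the invariant states
    exfalso
    have hCc : Convex ℝ (closure C) := (convex_convexHull ℝ _).closure
    obtain ⟨φ, u, hu, hu0⟩ := geometric_hahn_banach_closed_point hCc isClosed_closure h0
    rw [map_zero] at hu0
    set Ffun : K → (Γ ⧸ Λ) → ℝ := fun p c => φ (Pi.single p (lp.single 1 c 1)) with hFdef
    have key : ∀ w : K → lp (fun _ : Γ ⧸ Λ => ℝ) 1,
        (∀ q, ‖w q‖ ≤ 1) → ‖φ w‖ ≤ ‖φ‖ := by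
      intro w hw
      calc ‖φ w‖ ≤ ‖φ‖ * ‖w‖ := φ.le_opNorm w
        _ ≤ ‖φ‖ * 1 := mul_le_mul_of_nonneg_left
            ((pi_norm_le_iff_of_nonneg zero_le_one).mpr hw) (norm_nonneg φ)
        _ = ‖φ‖ := mul_one _
    have hFb : ∀ (p : K) c, ‖Ffun p c‖ ≤ ‖φ‖ := by
      intro p c
      rw [hFdef]
      refine key _ fun q => ?_
      by_cases h : q = p
      · subst h
        rw [Pi.single_eq_same]
        have := lp.norm_single (p := 1) (E := fun _ : Γ ⧸ Λ => ℝ) (by norm_num)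
          c (1 : ℝ)
        simp only [norm_one] at this
        simp [this]
      · rw [Pi.single_eq_of_ne h]
        simp
    set flp : K → lp (fun _ : Γ ⧸ Λ => ℝ) ⊤ := fun p =>
      ⟨Ffun p, memℓp_infty ⟨‖φ‖, by rintro r ⟨c, rfl⟩; exact hFb p c⟩⟩ with hflpdef
    set gflp : K → lp (fun _ : Γ ⧸ Λ => ℝ) ⊤ := fun p =>
      ⟨fun c => Ffun p ((↑p : Γ × S).1 • c),
        memℓp_infty ⟨‖φ‖, by rintro r ⟨c, rfl⟩; exact hFb p _⟩⟩ with hgflpdef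
    set A : Finset S := F ∪ (E ×ˢ F).image (fun q => q.1 • q.2) with hA
    have hmemA1 : ∀ p : K, (↑p : Γ × S).2 ∈ A :=
      fun p => Finset.mem_union_left _ ((Finset.mem_product.mp p.2).2)
    have hmemA2 : ∀ p : K, (↑p : Γ × S).1 • (↑p : Γ × S).2 ∈ A :=
      fun p => Finset.mem_union_right _ (Finset.mem_image.mpr ⟨↑p, p.2, rfl⟩)
    set Hlp : S → lp (fun _ : Γ ⧸ Λ => ℝ) ⊤ := fun x =>
      (∑ p : K, if (↑p : Γ × S).2 = x then gflp p else 0)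
        - (∑ p : K, if (↑p : Γ × S).1 • (↑p : Γ × S).2 = x then flp p else 0) with hHdef
    have hHc : ∀ x c, (Hlp x : (Γ ⧸ Λ) → ℝ) c =
        (∑ p : K, if (↑p : Γ × S).2 = x then Ffun p ((↑p : Γ × S).1 • c) else 0)
          - (∑ p : K, if (↑p : Γ × S).1 • (↑p : Γ × S).2 = x then Ffun p c else 0) := by
      intro x c
      rw [hHdef]
      simp only [lp.coeFn_sub, Pi.sub_apply, lp.coeFn_sum, Finset.sum_apply]
      congr 1 <;> refine Finset.sum_congr rfl fun p _ => ?_ <;> split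
      · rfl
      · simp only [lp.coeFn_zero, Pi.zero_apply]
      · rfl
      · simp only [lp.coeFn_zero, Pi.zero_apply]
    have hψH : ∀ x, ψ x (Hlp x) =
        (∑ p : K, if (↑p : Γ × S).2 = x then ψ x (gflp p) else 0)
          - (∑ p : K, if (↑p : Γ × S).1 • (↑p : Γ × S).2 = x then ψ x (flp p) else 0) := by
      intro x
      rw [hHdef]
      rw [map_sub, map_sum, map_sum]
      congr 1 <;> refine Finset.sum_congr rfl fun p _ => ?_ <;> split
      · rfl
      · exact map_zero _
      · rfl
      · exact map_zero _
    have hkey : ∑ x ∈ A, ψ x (Hlp x) = 0 := by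
      have h1 : ∑ x ∈ A, ∑ p : K, (if (↑p : Γ × S).2 = x then ψ x (gflp p) else 0)
          = ∑ p : K, ψ ((↑p : Γ × S).2) (gflp p) := by
        rw [Finset.sum_comm]
        refine Finset.sum_congr rfl fun p _ => ?_
        rw [Finset.sum_ite_eq A ((↑p : Γ × S).2) (fun y => ψ y (gflp p)),
          if_pos (hmemA1 p)]
      have h2 : ∑ x ∈ A, ∑ p : K,
            (if (↑p : Γ × S).1 • (↑p : Γ × S).2 = x then ψ x (flp p) else 0)
          = ∑ p : K, ψ ((↑p : Γ × S).1 • (↑p : Γ × S).2) (flp p) := by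
        rw [Finset.sum_comm]
        refine Finset.sum_congr rfl fun p _ => ?_
        rw [Finset.sum_ite_eq A ((↑p : Γ × S).1 • (↑p : Γ × S).2) (fun y => ψ y (flp p)),
          if_pos (hmemA2 p)]
      have e1 : ∑ x ∈ A, ψ x (Hlp x)
          = ∑ x ∈ A, ((∑ p : K, if (↑p : Γ × S).2 = x then ψ x (gflp p) else 0)
            - (∑ p : K, if (↑p : Γ × S).1 • (↑p : Γ × S).2 = x then ψ x (flp p) else 0)) :=
        Finset.sum_congr rfl fun x _ => hψH x
      rw [e1, Finset.sum_sub_distrib, h1, h2, ← Finset.sum_sub_distrib]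
      refine Finset.sum_eq_zero fun p _ => ?_
      refine sub_eq_zero.mpr (hequiv (↑p : Γ × S).1 (↑p : Γ × S).2 (flp p) (gflp p)
        (fun c => rfl)).symm
    have hAne : A.Nonempty := ⟨x₀, Finset.mem_union_left _ hx₀⟩
    have hcard : (0 : ℝ) < A.card := by exact_mod_cast Finset.card_pos.mpr hAne
    set η : ℝ := -u / (2 * A.card) with hηdef
    have hη : 0 < η := by
      rw [hηdef]
      exact div_pos (by linarith) (by linarith)
    have hch : ∀ x, ∃ c, ψ x (Hlp x) - η ≤ (Hlp x : (Γ ⧸ Λ) → ℝ) c := by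
      intro x
      by_contra hcon
      push_neg at hcon
      set a := ψ x (Hlp x) - η with ha
      have hpos : ∀ c, 0 ≤ ((a • (1 : lp (fun _ : Γ ⧸ Λ => ℝ) ⊤) - Hlp x :
          lp (fun _ : Γ ⧸ Λ => ℝ) ⊤) : (Γ ⧸ Λ) → ℝ) c := by
        intro c
        have h := hcon c
        simp only [lp.coeFn_sub, Pi.sub_apply, lp.coeFn_smul, Pi.smul_apply,
          lp.infty_coeFn_one, Pi.one_apply, smul_eq_mul, mul_one]
        linarith
      have h2 := (hstate x).2 _ hpos
      rw [map_sub, map_smul, (hstate x).1] at h2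
      simp only [smul_eq_mul, mul_one] at h2
      rw [ha] at h2
      linarith
    set i : S → Γ ⧸ Λ := fun x => (hch x).choose with hidef
    have hi : ∀ x, ψ x (Hlp x) - η ≤ (Hlp x : (Γ ⧸ Λ) → ℝ) (i x) := fun x => (hch x).choose_spec
    have hφD : φ (D i) = ∑ p : K, (Ffun p ((↑p : Γ × S).1 • i (↑p : Γ × S).2)
        - Ffun p (i ((↑p : Γ × S).1 • (↑p : Γ × S).2))) := by
      have hdecomp : D i = ∑ p : K, Pi.single p (D i p) := by
        funext q
        rw [Finset.sum_apply]
        symm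
        simp [Pi.single_apply, Finset.sum_ite_eq]
        rw [Finset.sum_eq_single q (fun b _ hb => if_neg (Ne.symm hb)) (fun h => absurd (Finset.mem_univ q) h), if_pos rfl]
      rw [hdecomp, map_sum]
      refine Finset.sum_congr rfl fun p _ => ?_
      rw [hDdef]
      simp only []
      rw [Pi.single_sub, map_sub]
    have hsum_lt : ∑ x ∈ A, (Hlp x : (Γ ⧸ Λ) → ℝ) (i x) < u := by
      have hmem : D i ∈ closure C :=
        subset_closure (subset_convexHull ℝ _ (Set.mem_range_self i))
      have hlt := hu _ hmem
      rw [hφD] at hlt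
      have heq : ∑ x ∈ A, (Hlp x : (Γ ⧸ Λ) → ℝ) (i x)
          = ∑ p : K, (Ffun p ((↑p : Γ × S).1 • i (↑p : Γ × S).2)
            - Ffun p (i ((↑p : Γ × S).1 • (↑p : Γ × S).2))) := by
        have h1 : ∑ x ∈ A, ∑ p : K,
              (if (↑p : Γ × S).2 = x then Ffun p ((↑p : Γ × S).1 • i x) else 0)
            = ∑ p : K, Ffun p ((↑p : Γ × S).1 • i (↑p : Γ × S).2) := by
          rw [Finset.sum_comm]
          refine Finset.sum_congr rfl fun p _ => ?_
          rw [Finset.sum_ite_eq A ((↑p : Γ × S).2)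
            (fun y => Ffun p ((↑p : Γ × S).1 • i y)), if_pos (hmemA1 p)]
        have h2 : ∑ x ∈ A, ∑ p : K,
              (if (↑p : Γ × S).1 • (↑p : Γ × S).2 = x then Ffun p (i x) else 0)
            = ∑ p : K, Ffun p (i ((↑p : Γ × S).1 • (↑p : Γ × S).2)) := by
          rw [Finset.sum_comm]
          refine Finset.sum_congr rfl fun p _ => ?_
          rw [Finset.sum_ite_eq A ((↑p : Γ × S).1 • (↑p : Γ × S).2)
            (fun y => Ffun p (i y)), if_pos (hmemA2 p)]
        have e1 : ∑ x ∈ A, (Hlp x : (Γ ⧸ Λ) → ℝ) (i x)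
            = ∑ x ∈ A, ((∑ p : K, if (↑p : Γ × S).2 = x
                then Ffun p ((↑p : Γ × S).1 • i x) else 0)
              - (∑ p : K, if (↑p : Γ × S).1 • (↑p : Γ × S).2 = x
                then Ffun p (i x) else 0)) :=
          Finset.sum_congr rfl fun x _ => hHc x (i x)
        rw [e1, Finset.sum_sub_distrib, h1, h2, ← Finset.sum_sub_distrib]
      exact heq.trans_lt hlt
    clear_value η i Hlp gflp flp Ffun A
    have hfin : (0 : ℝ) ≤ ∑ x ∈ A, ((Hlp x : (Γ ⧸ Λ) → ℝ) (i x) + η) := by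
      rw [← hkey]
      exact Finset.sum_le_sum fun x _ => by linarith [hi x]
    rw [Finset.sum_add_distrib, Finset.sum_const, nsmul_eq_mul] at hfin
    have hmul : (A.card : ℝ) * η = -u / 2 := by
      rw [hηdef]
      field_simp
    linarith
end

section
/- Let Γ be a discrete group, S a Γ-set, and Λ ≤ Γ. Then S is (Γ,Λ)-amenable (there is a net of maps μ_i : S → Prob(Γ/Λ) with ‖g·μ_i(x) − μ_i(g x)‖_1 → 0 for every g ∈ Γ, uniformly on finite subsets of S) if and only if there exists a unital positive Γ-equivariant linear map φ : ℓ^∞(Γ/Λ) → ℓ^∞(S). -/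
open Filter Topology

lemma IsProbVec.summable_mul {ι : Type*} {μ : ι → ℝ} (h : IsProbVec μ)
    (f : lp (fun _ : ι => ℝ) ⊤) : Summable (fun i => μ i * f i) := by
  refine Summable.of_norm_bounded (g := fun i => μ i * ‖f‖) (h.summable.mul_right _) (fun i => ?_)
  rw [norm_mul, Real.norm_eq_abs, abs_of_nonneg (h.1 i)]
  exact mul_le_mul_of_nonneg_left ((Real.norm_eq_abs _ ▸ lp.norm_apply_le_norm (by norm_num) f i)) (h.1 i)

lemma IsProbVec.abs_tsum_mul_le {ι : Type*} {μ : ι → ℝ} (h : IsProbVec μ)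
    (f : lp (fun _ : ι => ℝ) ⊤) : |∑' i, μ i * f i| ≤ ‖f‖ := by
  calc |∑' i, μ i * f i| ≤ ∑' i, |μ i * f i| := by
        simpa [Real.norm_eq_abs, abs_mul] using norm_tsum_le_tsum_norm (h.summable_mul f).norm
    _ ≤ ∑' i, μ i * ‖f‖ := by
        refine Summable.tsum_le_tsum (fun i => ?_) ((h.summable_mul f).abs) (h.summable.mul_right _)
        rw [abs_mul, abs_of_nonneg (h.1 i)]
        exact mul_le_mul_of_nonneg_left ((Real.norm_eq_abs _ ▸ lp.norm_apply_le_norm (by norm_num) f i)) (h.1 i)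
    _ = ‖f‖ := by rw [tsum_mul_right, h.2, one_mul]

set_option maxHeartbeats 1000000 in
set_option synthInstance.maxHeartbeats 400000 in
lemma fwd {Γ S : Type*} [Group Γ] [MulAction Γ S] (Λ : Subgroup Γ)
    (H : ∀ ε > (0 : ℝ), ∀ (E : Finset Γ) (F : Finset S),
      ∃ μ : S → (Γ ⧸ Λ) → ℝ, (∀ x, IsProbVec (μ x)) ∧
        ∀ g ∈ E, ∀ x ∈ F, ∑' c : Γ ⧸ Λ, |μ x (g⁻¹ • c) - μ (g • x) c| < ε) :
    (∃ φ : lp (fun _ : Γ ⧸ Λ => ℝ) ⊤ →ₗ[ℝ] lp (fun _ : S => ℝ) ⊤,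
      φ 1 = 1 ∧
      (∀ f : lp (fun _ : Γ ⧸ Λ => ℝ) ⊤, (∀ c, 0 ≤ f c) → ∀ x, 0 ≤ φ f x) ∧
      (∀ (g : Γ) (f f' : lp (fun _ : Γ ⧸ Λ => ℝ) ⊤),
        (∀ c, f' c = f (g⁻¹ • c)) → ∀ x : S, φ f' x = φ f (g⁻¹ • x))) := by
  classical
  -- index type and ultrafilter
  have Hc : ∀ i : ℕ × Finset Γ × Finset S, ∃ μ : S → (Γ ⧸ Λ) → ℝ, (∀ x, IsProbVec (μ x)) ∧
      ∀ g ∈ i.2.1, ∀ x ∈ i.2.2, ∑' c : Γ ⧸ Λ, |μ x (g⁻¹ • c) - μ (g • x) c| < 1 / (i.1 + 1) :=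
    fun i => H _ (by positivity) i.2.1 i.2.2
  choose μ hprob happrox using Hc
  let 𝒰 : Ultrafilter (ℕ × Finset Γ × Finset S) := Ultrafilter.of atTop
  have h𝒰le : (𝒰 : Filter (ℕ × Finset Γ × Finset S)) ≤ atTop := Ultrafilter.of_le atTop
  -- existence of limits
  have hex : ∀ (f : lp (fun _ : Γ ⧸ Λ => ℝ) ⊤) (x : S),
      ∃ r : ℝ, Tendsto (fun i : ℕ × Finset Γ × Finset S => ∑' c, μ i x c * f c) ↑𝒰 (𝓝 r) := by
    intro f x
    have hsub : (𝒰 : Filter (ℕ × Finset Γ × Finset S)).map (fun i : ℕ × Finset Γ × Finset S => ∑' c, μ i x c * f c) ≤ 𝓟 (Set.Icc (-‖f‖) ‖f‖) := by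
      rw [Filter.le_principal_iff, Filter.mem_map]
      have : ∀ i : ℕ × Finset Γ × Finset S, (∑' c, μ i x c * f c) ∈ Set.Icc (-‖f‖) ‖f‖ := fun i =>
        abs_le.1 ((hprob i x).abs_tsum_mul_le f)
      exact Filter.univ_mem' this
    obtain ⟨r, _, hr⟩ := isCompact_Icc.ultrafilter_le_nhds
      (Ultrafilter.map (fun i : ℕ × Finset Γ × Finset S => ∑' c, μ i x c * f c) 𝒰) hsub
    exact ⟨r, hr⟩
  choose L hLt using hex
  have hLbound : ∀ f x, |L f x| ≤ ‖f‖ := by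
    intro f x
    have h1 : Tendsto (fun i : ℕ × Finset Γ × Finset S => |∑' c, μ i x c * f c|) ↑𝒰 (𝓝 |L f x|) :=
      (hLt f x).abs
    exact le_of_tendsto h1 (Filter.univ_mem' fun i => (hprob i x).abs_tsum_mul_le f)
  have hmem : ∀ f, Memℓp (L f) ⊤ := by
    intro f
    apply memℓp_infty
    refine ⟨‖f‖, ?_⟩
    rintro r ⟨x, rfl⟩
    simpa [Real.norm_eq_abs] using hLbound f x
  set φ : lp (fun _ : Γ ⧸ Λ => ℝ) ⊤ →ₗ[ℝ] lp (fun _ : S => ℝ) ⊤ :=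
    { toFun := fun f => ⟨L f, hmem f⟩
      map_add' := by
        intro f g
        apply lp.ext
        funext x
        have h1 : Tendsto (fun i : ℕ × Finset Γ × Finset S => ∑' c, μ i x c * (f + g) c) ↑𝒰 (𝓝 (L f x + L g x)) := by
          have := (hLt f x).add (hLt g x)
          refine Tendsto.congr (fun i => ?_) this
          rw [← Summable.tsum_add ((hprob i x).summable_mul f) ((hprob i x).summable_mul g)]
          congr 1; funext c
          rw [lp.coeFn_add]; simp [mul_add]
        exact tendsto_nhds_unique (hLt (f+g) x) h1
      map_smul' := by
        intro r f
        apply lp.ext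
        funext x
        have h1 : Tendsto (fun i : ℕ × Finset Γ × Finset S => ∑' c, μ i x c * (r • f) c) ↑𝒰 (𝓝 (r * L f x)) := by
          have := (hLt f x).const_mul r
          refine Tendsto.congr (fun i => ?_) this
          rw [← tsum_mul_left]
          congr 1; funext c
          rw [lp.coeFn_smul]; simp; ring
        exact tendsto_nhds_unique (hLt (r • f) x) h1 } with hφ
  have hφapp : ∀ f x, φ f x = L f x := fun f x => rfl
  refine ⟨φ, ?_, ?_, ?_⟩
  · apply lp.ext
    funext x
    have h1 : Tendsto (fun i : ℕ × Finset Γ × Finset S => ∑' c, μ i x c * (1 : lp (fun _ : Γ ⧸ Λ => ℝ) ⊤) c)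
        ↑𝒰 (𝓝 1) := by
      have : (fun i : ℕ × Finset Γ × Finset S => ∑' c, μ i x c * (1 : lp (fun _ : Γ ⧸ Λ => ℝ) ⊤) c) = fun _ => (1:ℝ) := by
        funext i
        rw [show ⇑(1 : lp (fun _ : Γ ⧸ Λ => ℝ) ⊤) = fun _ => (1:ℝ) from lp.infty_coeFn_one]
        simpa using (hprob i x).2
      rw [this]
      exact tendsto_const_nhds
    have h2 := tendsto_nhds_unique (hLt 1 x) h1
    have h3 : (1 : lp (fun _ : S => ℝ) ⊤) x = 1 := by
      rw [show ⇑(1 : lp (fun _ : S => ℝ) ⊤) = fun _ => (1:ℝ) from lp.infty_coeFn_one]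
    show L 1 x = (1 : lp (fun _ : S => ℝ) ⊤) x
    rw [h2, h3]
  · intro f hf x
    rw [hφapp]
    refine ge_of_tendsto (hLt f x) (Filter.univ_mem' fun i => ?_)
    exact tsum_nonneg fun c => mul_nonneg ((hprob i x).1 c) (hf c)
  · intro g f f' hff' x
    rw [hφapp, hφapp]
    -- compare the two nets
    have key : Tendsto (fun i : ℕ × Finset Γ × Finset S =>
        (∑' c, μ i x c * f' c) - (∑' c, μ i (g⁻¹ • x) c * f c)) ↑𝒰 (𝓝 0) := by
      rw [Metric.tendsto_nhds]
      intro ε hε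
      rcases exists_nat_gt (‖f‖ / ε + 1) with ⟨n, hn⟩
      have hmem𝒰 : {i : ℕ × Finset Γ × Finset S | (n, ({g⁻¹} : Finset Γ), ({x} : Finset S)) ≤ i} ∈ (𝒰 : Filter (ℕ × Finset Γ × Finset S)) := by
        apply h𝒰le
        exact Filter.eventually_atTop.2 ⟨(n, ({g⁻¹} : Finset Γ), ({x} : Finset S)), fun b hb => hb⟩
      refine Filter.mem_of_superset hmem𝒰 ?_
      intro i hi
      simp only [Set.mem_setOf_eq] at hi ⊢
      obtain ⟨hn1, hE1, hF1⟩ := hi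
      have hg : g⁻¹ ∈ i.2.1 := hE1 (Finset.mem_singleton_self _)
      have hx : x ∈ i.2.2 := hF1 (Finset.mem_singleton_self _)
      have happ := happrox i g⁻¹ hg x hx
      rw [inv_inv] at happ
      -- rewrite first tsum by substitution c ↦ g • c is wrong; instead f' c = f (g⁻¹ • c)
      have hsub : (∑' c, μ i x c * f' c) = ∑' c : Γ ⧸ Λ, μ i x (g • c) * f c := by
        rw [← (MulAction.toPerm (g : Γ) : Equiv.Perm (Γ ⧸ Λ)).tsum_eq
          (fun c => μ i x c * f' c)]
        congr 1; funext c
        simp only [MulAction.toPerm_apply]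
        rw [hff']
        congr 2
        simp [inv_smul_smul]
      rw [hsub]
      have hνprob : IsProbVec (fun c : Γ ⧸ Λ => μ i x (g • c)) := by
        refine ⟨fun c => (hprob i x).1 _, ?_⟩
        have he := (MulAction.toPerm (g : Γ) : Equiv.Perm (Γ ⧸ Λ)).tsum_eq (μ i x)
        simp only [MulAction.toPerm_apply] at he
        exact he.trans (hprob i x).2
      have hsum1 := hνprob.summable_mul f
      have hsum2 := (hprob i (g⁻¹ • x)).summable_mul f
      have hdiff : (∑' c, μ i x (g • c) * f c) - (∑' c, μ i (g⁻¹ • x) c * f c)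
          = ∑' c, (μ i x (g • c) - μ i (g⁻¹ • x) c) * f c := by
        rw [← Summable.tsum_sub hsum1 hsum2]
        congr 1; funext c; ring
      have habs_sum : Summable (fun c : Γ ⧸ Λ => |μ i x (g • c) - μ i (g⁻¹ • x) c|) :=
        (hνprob.summable.sub (hprob i (g⁻¹ • x)).summable).abs
      have hbound : |∑' c, (μ i x (g • c) - μ i (g⁻¹ • x) c) * f c|
          ≤ (∑' c, |μ i x (g • c) - μ i (g⁻¹ • x) c|) * ‖f‖ := by
        calc |∑' c, (μ i x (g • c) - μ i (g⁻¹ • x) c) * f c|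
            ≤ ∑' c, |(μ i x (g • c) - μ i (g⁻¹ • x) c) * f c| := by
              simpa [Real.norm_eq_abs] using
                norm_tsum_le_tsum_norm (hsum1.sub hsum2 |>.congr (g := fun c => (μ i x (g • c) - μ i (g⁻¹ • x) c) * f c) (by intro c; ring)).norm
          _ ≤ ∑' c, |μ i x (g • c) - μ i (g⁻¹ • x) c| * ‖f‖ := by
              refine Summable.tsum_le_tsum (fun c => ?_)
                ((hsum1.sub hsum2 |>.congr (g := fun c => (μ i x (g • c) - μ i (g⁻¹ • x) c) * f c) (by intro c; ring)).abs)
                (habs_sum.mul_right _)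
              rw [abs_mul]
              exact mul_le_mul_of_nonneg_left
                (Real.norm_eq_abs _ ▸ lp.norm_apply_le_norm (by norm_num) f c) (abs_nonneg _)
          _ = (∑' c, |μ i x (g • c) - μ i (g⁻¹ • x) c|) * ‖f‖ := tsum_mul_right
      have hdist : dist ((∑' c, μ i x (g • c) * f c) - (∑' c, μ i (g⁻¹ • x) c * f c)) 0 < ε := by
        rw [Real.dist_eq, sub_zero, hdiff]
        have hni : (n : ℝ) ≤ (i.1 : ℝ) := Nat.cast_le.2 hn1
        have hεf : (∑' c, |μ i x (g • c) - μ i (g⁻¹ • x) c|) * ‖f‖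
            ≤ (1 / ((i.1:ℝ) + 1)) * ‖f‖ :=
          mul_le_mul_of_nonneg_right (le_of_lt happ) (norm_nonneg f)
        have hlast : (1 / ((i.1:ℝ) + 1)) * ‖f‖ < ε := by
          rw [div_mul_eq_mul_div, one_mul, div_lt_iff₀ (by positivity)]
          have h1 : ‖f‖ / ε < (n : ℝ) := by linarith
          have h2 : ‖f‖ < ε * (n : ℝ) := by
            rw [div_lt_iff₀ hε] at h1; linarith
          have h3 : ε * (n:ℝ) ≤ ε * ((i.1:ℝ) + 1) := by nlinarith
          linarith
        calc |∑' c, (μ i x (g • c) - μ i (g⁻¹ • x) c) * f c|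
            ≤ (∑' c, |μ i x (g • c) - μ i (g⁻¹ • x) c|) * ‖f‖ := hbound
          _ ≤ (1 / ((i.1:ℝ) + 1)) * ‖f‖ := hεf
          _ < ε := hlast
      exact hdist
    have h1 := hLt f' x
    have h2 := hLt f (g⁻¹ • x)
    have h3 := tendsto_nhds_unique (h1.sub h2) key
    show L f' x = L f (g⁻¹ • x)
    linarith

lemma aux_div (u cR : ℝ) (h : cR + 1 ≠ 0) : (cR + 1) * (u / (2 * (cR + 1))) = u / 2 := by
  field_simp

lemma aux_final (u c δ : ℝ) (hδ : 0 ≤ δ) (h : (c + 1) * δ = u / 2) : c * δ ≤ u / 2 := by nlinarith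

set_option maxHeartbeats 1000000 in
set_option synthInstance.maxHeartbeats 400000 in
lemma bwd {Γ S : Type*} [Group Γ] [MulAction Γ S] (Λ : Subgroup Γ)
    (H : ∃ φ : lp (fun _ : Γ ⧸ Λ => ℝ) ⊤ →ₗ[ℝ] lp (fun _ : S => ℝ) ⊤,
      φ 1 = 1 ∧
      (∀ f : lp (fun _ : Γ ⧸ Λ => ℝ) ⊤, (∀ c, 0 ≤ f c) → ∀ x, 0 ≤ φ f x) ∧
      (∀ (g : Γ) (f f' : lp (fun _ : Γ ⧸ Λ => ℝ) ⊤),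
        (∀ c, f' c = f (g⁻¹ • c)) → ∀ x : S, φ f' x = φ f (g⁻¹ • x))) :
    (∀ ε > (0 : ℝ), ∀ (E : Finset Γ) (F : Finset S),
      ∃ μ : S → (Γ ⧸ Λ) → ℝ, (∀ x, IsProbVec (μ x)) ∧
        ∀ g ∈ E, ∀ x ∈ F, ∑' c : Γ ⧸ Λ, |μ x (g⁻¹ • c) - μ (g • x) c| < ε) := by
  classical
  obtain ⟨φ, hφ1, hφpos, hφeq⟩ := H
  intro ε hε E F
  haveI : Nonempty (Γ ⧸ Λ) := ⟨QuotientGroup.mk 1⟩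
  by_contra hcon
  push_neg at hcon
  -- hcon : ∀ μ, (∀ x, IsProbVec (μ x)) → ∃ g ∈ E, ∃ x ∈ F, ε ≤ ∑' c, |μ x (g⁻¹ • c) - μ (g • x) c|
  set dl : (Γ ⧸ Λ) → lp (fun _ : Γ ⧸ Λ => ℝ) 1 := fun a => lp.single 1 a (1:ℝ) with hdl
  have dl_apply : ∀ a b : Γ ⧸ Λ, dl a b = if b = a then (1:ℝ) else 0 := by
    intro a b
    by_cases h : b = a
    · subst h; rw [if_pos rfl]; exact lp.single_apply_self (E := fun _ : Γ ⧸ Λ => ℝ) 1 b (1:ℝ)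
    · rw [if_neg h]; exact lp.single_apply_ne (E := fun _ : Γ ⧸ Λ => ℝ) 1 a _ h
  have dl_norm : ∀ a : Γ ⧸ Λ, ‖dl a‖ = 1 := by
    intro a
    have := lp.norm_single (p := 1) (E := fun _ : Γ ⧸ Λ => ℝ) (by norm_num) a (1:ℝ)
    exact this.trans norm_one
  set P : (S → Γ ⧸ Λ) → ({g // g ∈ E} × {x // x ∈ F} → lp (fun _ : Γ ⧸ Λ => ℝ) 1) :=
    fun c gx => dl (gx.1.1 • c gx.2.1) - dl (c (gx.1.1 • gx.2.1)) with hP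
  have l1norm : ∀ w : lp (fun _ : Γ ⧸ Λ => ℝ) 1, ‖w‖ = ∑' a, |w a| := by
    intro w
    rw [lp.norm_eq_tsum_rpow (by norm_num) w]
    simp [Real.norm_eq_abs]
  -- Claim 1 : every element of the convex hull has norm ≥ ε
  have hA : ∀ z ∈ convexHull ℝ (Set.range P), ε ≤ ‖z‖ := by
    intro z hz
    rw [convexHull_eq] at hz
    obtain ⟨κ, t, w, p, hw0, hw1, hp, hcm⟩ := hz
    choose cc hcc using hp
    set μ' : S → (Γ ⧸ Λ) → ℝ := fun x a => ∑ i ∈ t.attach, (if a = cc i.1 i.2 x then w i.1 else 0)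
      with hμ'
    have hμsummable : ∀ (x : S) (i : {y // y ∈ t}),
        Summable (fun a : Γ ⧸ Λ => if a = cc i.1 i.2 x then w i.1 else 0) :=
      fun x i => (hasSum_ite_eq (cc i.1 i.2 x) (w i.1)).summable
    have hμprob : ∀ x, IsProbVec (μ' x) := by
      intro x
      constructor
      · intro a
        refine Finset.sum_nonneg fun i _ => ?_
        split
        · exact hw0 i.1 i.2
        · exact le_refl 0
      · rw [Summable.tsum_finsetSum (fun i _ => hμsummable x i)]
        rw [← hw1, ← Finset.sum_attach t w]
        exact Finset.sum_congr rfl fun i _ => tsum_ite_eq _ _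
    obtain ⟨g, hg, x, hx, hge⟩ := hcon μ' hμprob
    set gx : {g // g ∈ E} × {x // x ∈ F} := (⟨g, hg⟩, ⟨x, hx⟩) with hgx
    have hzeq : z = ∑ i ∈ t, w i • p i := by
      rw [← hcm, Finset.centerMass_eq_of_sum_1 _ _ hw1]
    have hcoord : ∀ a : Γ ⧸ Λ, (z gx) a = μ' x (g⁻¹ • a) - μ' (g • x) a := by
      intro a
      have h1 : z gx = ∑ i ∈ t.attach, w i.1 • (P (cc i.1 i.2) gx) := by
        rw [hzeq, ← Finset.sum_attach t (fun i => w i • p i)]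
        rw [Finset.sum_apply]
        exact Finset.sum_congr rfl fun i _ => by rw [hcc i.1 i.2, Pi.smul_apply]
      rw [h1, lp.coeFn_sum, Finset.sum_apply]
      have h2 : ∀ i : {y // y ∈ t}, (w i.1 • (P (cc i.1 i.2) gx)) a
          = (if a = g • cc i.1 i.2 x then w i.1 else 0)
            - (if a = cc i.1 i.2 (g • x) then w i.1 else 0) := by
        intro i
        rw [lp.coeFn_smul, Pi.smul_apply]
        have h3 : (P (cc i.1 i.2) gx) a
            = (if a = g • cc i.1 i.2 x then (1:ℝ) else 0) - (if a = cc i.1 i.2 (g • x) then (1:ℝ) else 0) := by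
          simp only [hP]
          rw [lp.coeFn_sub, Pi.sub_apply, dl_apply, dl_apply]
        rw [h3]
        simp only [smul_eq_mul, mul_sub, mul_ite, mul_one, mul_zero]
      rw [Finset.sum_congr rfl fun i _ => h2 i, Finset.sum_sub_distrib]
      have h4 : μ' x (g⁻¹ • a) = ∑ i ∈ t.attach, (if a = g • cc i.1 i.2 x then w i.1 else 0) := by
        rw [hμ']
        exact Finset.sum_congr rfl fun i _ => by simp only [inv_smul_eq_iff]
      rw [h4, hμ']
    have h5 : ε ≤ ‖z gx‖ := by
      rw [l1norm]
      have : (∑' a, |(z gx) a|) = ∑' a, |μ' x (g⁻¹ • a) - μ' (g • x) a| :=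
        tsum_congr fun a => by rw [hcoord a]
      rw [this]
      exact hge
    exact h5.trans (norm_le_pi_norm z gx)
  -- Claim 2 : 0 is not in the closure
  have h0 : (0 : {g // g ∈ E} × {x // x ∈ F} → lp (fun _ : Γ ⧸ Λ => ℝ) 1)
      ∉ closure (convexHull ℝ (Set.range P)) := by
    intro h0mem
    have hsub : closure (convexHull ℝ (Set.range P)) ⊆ {z | ε ≤ ‖z‖} :=
      closure_minimal (fun z hz => hA z hz)
        (isClosed_le continuous_const continuous_norm)
    have := hsub h0mem
    simp only [Set.mem_setOf_eq, norm_zero] at this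
    linarith
  -- Hahn-Banach separation
  obtain ⟨f, u, hfu, hub⟩ := geometric_hahn_banach_point_closed
    ((convex_convexHull ℝ _).closure) isClosed_closure h0
  have hu0 : 0 < u := by
    have : f 0 = 0 := map_zero f
    rw [this] at hfu
    exact hfu
  have hub' : ∀ c : S → Γ ⧸ Λ, u < f (P c) := fun c =>
    hub _ (subset_closure (subset_convexHull ℝ _ (Set.mem_range_self c)))
  -- the dual functions
  set hh : ({g // g ∈ E} × {x // x ∈ F}) → (Γ ⧸ Λ) → ℝ :=
    fun gx a => f (Pi.single gx (dl a)) with hhh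
  have hhb : ∀ gx a, |hh gx a| ≤ ‖f‖ := by
    intro gx a
    have h1 : ‖f (Pi.single gx (dl a))‖ ≤ ‖f‖ *
        ‖(Pi.single gx (dl a) : {g // g ∈ E} × {x // x ∈ F} → lp (fun _ : Γ ⧸ Λ => ℝ) 1)‖ :=
      f.le_opNorm _
    rw [Pi.norm_single, dl_norm, mul_one] at h1
    simpa [Real.norm_eq_abs] using h1
  have hdecomp : ∀ c : S → Γ ⧸ Λ, f (P c)
      = ∑ gx : {g // g ∈ E} × {x // x ∈ F},
          (hh gx (gx.1.1 • c gx.2.1) - hh gx (c (gx.1.1 • gx.2.1))) := by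
    intro c
    conv_lhs => rw [← Finset.univ_sum_single (P c)]
    rw [map_sum]
    refine Finset.sum_congr rfl fun gx _ => ?_
    have : Pi.single (M := fun _ : {g // g ∈ E} × {x // x ∈ F} => lp (fun _ : Γ ⧸ Λ => ℝ) 1) gx (P c gx)
        = Pi.single gx (dl (gx.1.1 • c gx.2.1)) - Pi.single gx (dl (c (gx.1.1 • gx.2.1))) := by
      rw [← Pi.single_sub]
    rw [this, map_sub]
  -- the finite set of relevant points of S
  set F' : Finset S := F ∪ (E ×ˢ F).image (fun q => q.1 • q.2) with hF'
  have hmemF1 : ∀ gx : {g // g ∈ E} × {x // x ∈ F}, (gx.2.1 : S) ∈ F' :=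
    fun gx => Finset.mem_union_left _ gx.2.2
  have hmemF2 : ∀ gx : {g // g ∈ E} × {x // x ∈ F}, gx.1.1 • (gx.2.1 : S) ∈ F' := by
    intro gx
    refine Finset.mem_union_right _ (Finset.mem_image.2 ⟨(gx.1.1, gx.2.1), ?_, rfl⟩)
    exact Finset.mem_product.2 ⟨gx.1.2, gx.2.2⟩
  set G : S → (Γ ⧸ Λ) → ℝ := fun y a => ∑ gx : {g // g ∈ E} × {x // x ∈ F},
      ((if (gx.2.1 : S) = y then hh gx (gx.1.1 • a) else 0)
        - (if gx.1.1 • (gx.2.1 : S) = y then hh gx a else 0)) with hG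
  have hregroup : ∀ c : S → Γ ⧸ Λ, ∑ y ∈ F', G y (c y) = f (P c) := by
    intro c
    rw [hdecomp c, hG]
    simp only
    rw [Finset.sum_comm]
    refine Finset.sum_congr rfl fun gx _ => ?_
    rw [Finset.sum_sub_distrib]
    congr 1
    · rw [Finset.sum_ite_eq F' (gx.2.1 : S) (fun y => hh gx (gx.1.1 • c y)),
        if_pos (hmemF1 gx)]
    · rw [Finset.sum_ite_eq F' (gx.1.1 • (gx.2.1 : S)) (fun y => hh gx (c y)),
        if_pos (hmemF2 gx)]
  -- boundedness of G
  have hGb : ∀ y a, |G y a| ≤ (Fintype.card ({g // g ∈ E} × {x // x ∈ F}) : ℝ) * (2 * ‖f‖) := by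
    intro y a
    rw [hG]
    simp only
    refine (Finset.abs_sum_le_sum_abs _ _).trans ?_
    have hbound : ∀ gx : {g // g ∈ E} × {x // x ∈ F},
        |(if (gx.2.1 : S) = y then hh gx (gx.1.1 • a) else 0)
          - (if gx.1.1 • (gx.2.1 : S) = y then hh gx a else 0)| ≤ 2 * ‖f‖ := by
      intro gx
      have h1 : |(if (gx.2.1 : S) = y then hh gx (gx.1.1 • a) else 0)| ≤ ‖f‖ := by
        split
        · exact hhb gx _
        · simpa using norm_nonneg f
      have h2 : |(if gx.1.1 • (gx.2.1 : S) = y then hh gx a else 0)| ≤ ‖f‖ := by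
        split
        · exact hhb gx _
        · simpa using norm_nonneg f
      calc |_ - _| ≤ _ + _ := abs_sub _ _
        _ ≤ 2 * ‖f‖ := by linarith
    calc ∑ gx : {g // g ∈ E} × {x // x ∈ F}, |(if (gx.2.1 : S) = y then hh gx (gx.1.1 • a) else 0)
          - (if gx.1.1 • (gx.2.1 : S) = y then hh gx a else 0)|
        ≤ ∑ _gx : {g // g ∈ E} × {x // x ∈ F}, 2 * ‖f‖ :=
          Finset.sum_le_sum fun gx _ => hbound gx
      _ = (Fintype.card ({g // g ∈ E} × {x // x ∈ F}) : ℝ) * (2 * ‖f‖) := by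
          rw [Finset.sum_const, Finset.card_univ, nsmul_eq_mul]
  -- lp-infinity elements
  have hHhmem : ∀ gx, Memℓp (hh gx) (⊤ : ENNReal) := by
    intro gx
    refine memℓp_infty ⟨‖f‖, ?_⟩
    rintro r ⟨a, rfl⟩
    simpa [Real.norm_eq_abs] using hhb gx a
  have hHgmem : ∀ gx : {g // g ∈ E} × {x // x ∈ F},
      Memℓp (fun a : Γ ⧸ Λ => hh gx (gx.1.1 • a)) (⊤ : ENNReal) := by
    intro gx
    refine memℓp_infty ⟨‖f‖, ?_⟩
    rintro r ⟨a, rfl⟩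
    simpa [Real.norm_eq_abs] using hhb gx (gx.1.1 • a)
  have hGmem : ∀ y, Memℓp (G y) (⊤ : ENNReal) := by
    intro y
    refine memℓp_infty ⟨(Fintype.card ({g // g ∈ E} × {x // x ∈ F}) : ℝ) * (2 * ‖f‖), ?_⟩
    rintro r ⟨a, rfl⟩
    simpa [Real.norm_eq_abs] using hGb y a
  set Hh : ({g // g ∈ E} × {x // x ∈ F}) → lp (fun _ : Γ ⧸ Λ => ℝ) ⊤ :=
    fun gx => ⟨hh gx, hHhmem gx⟩ with hHh
  set Hg : ({g // g ∈ E} × {x // x ∈ F}) → lp (fun _ : Γ ⧸ Λ => ℝ) ⊤ :=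
    fun gx => ⟨fun a => hh gx (gx.1.1 • a), hHgmem gx⟩ with hHg
  set Gel : S → lp (fun _ : Γ ⧸ Λ => ℝ) ⊤ := fun y => ⟨G y, hGmem y⟩ with hGel
  have hGelEq : ∀ y, Gel y = ∑ gx : {g // g ∈ E} × {x // x ∈ F},
      ((if (gx.2.1 : S) = y then Hg gx else 0)
        - (if gx.1.1 • (gx.2.1 : S) = y then Hh gx else 0)) := by
    intro y
    apply lp.ext
    rw [lp.coeFn_sum]
    funext a
    rw [Finset.sum_apply]
    show G y a = _
    rw [hG]
    simp only
    refine Finset.sum_congr rfl fun gx _ => ?_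
    rw [lp.coeFn_sub, Pi.sub_apply]
    congr 1
    · by_cases h : (gx.2.1 : S) = y
      · rw [if_pos h, if_pos h]
      · rw [if_neg h, if_neg h]; simp
    · by_cases h : gx.1.1 • (gx.2.1 : S) = y
      · rw [if_pos h, if_pos h]
      · rw [if_neg h, if_neg h]; simp
  -- the equivariance computation : the G-sum integrates to zero
  have hzero : ∑ y ∈ F', φ (Gel y) y = 0 := by
    have hstep : ∀ y, φ (Gel y) = ∑ gx : {g // g ∈ E} × {x // x ∈ F},
        ((if (gx.2.1 : S) = y then φ (Hg gx) else 0)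
          - (if gx.1.1 • (gx.2.1 : S) = y then φ (Hh gx) else 0)) := by
      intro y
      rw [hGelEq y, map_sum]
      refine Finset.sum_congr rfl fun gx _ => ?_
      rw [map_sub]
      congr 1
      · by_cases h : (gx.2.1 : S) = y
        · rw [if_pos h, if_pos h]
        · rw [if_neg h, if_neg h, map_zero]
      · by_cases h : gx.1.1 • (gx.2.1 : S) = y
        · rw [if_pos h, if_pos h]
        · rw [if_neg h, if_neg h, map_zero]
    have hstep2 : ∀ y, φ (Gel y) y = ∑ gx : {g // g ∈ E} × {x // x ∈ F},
        ((if (gx.2.1 : S) = y then φ (Hg gx) y else 0)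
          - (if gx.1.1 • (gx.2.1 : S) = y then φ (Hh gx) y else 0)) := by
      intro y
      rw [hstep y, lp.coeFn_sum, Finset.sum_apply]
      refine Finset.sum_congr rfl fun gx _ => ?_
      rw [lp.coeFn_sub, Pi.sub_apply]
      congr 1
      · by_cases h : (gx.2.1 : S) = y
        · rw [if_pos h, if_pos h]
        · rw [if_neg h, if_neg h]; simp
      · by_cases h : gx.1.1 • (gx.2.1 : S) = y
        · rw [if_pos h, if_pos h]
        · rw [if_neg h, if_neg h]; simp
    calc ∑ y ∈ F', φ (Gel y) y
        = ∑ y ∈ F', ∑ gx : {g // g ∈ E} × {x // x ∈ F},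
            ((if (gx.2.1 : S) = y then φ (Hg gx) y else 0)
              - (if gx.1.1 • (gx.2.1 : S) = y then φ (Hh gx) y else 0)) :=
          Finset.sum_congr rfl fun y _ => hstep2 y
      _ = ∑ gx : {g // g ∈ E} × {x // x ∈ F},
            (φ (Hg gx) gx.2.1 - φ (Hh gx) (gx.1.1 • gx.2.1)) := by
          rw [Finset.sum_comm]
          refine Finset.sum_congr rfl fun gx _ => ?_
          rw [Finset.sum_sub_distrib]
          congr 1
          · rw [Finset.sum_ite_eq F' (gx.2.1 : S) (fun y => φ (Hg gx) y),
              if_pos (hmemF1 gx)]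
          · rw [Finset.sum_ite_eq F' (gx.1.1 • (gx.2.1 : S)) (fun y => φ (Hh gx) y),
              if_pos (hmemF2 gx)]
      _ = 0 := by
          refine Finset.sum_eq_zero fun gx _ => sub_eq_zero.2 ?_
          have heqv := hφeq (gx.1.1)⁻¹ (Hh gx) (Hg gx) ?_ gx.2.1
          · rw [inv_inv] at heqv
            exact heqv
          · intro cq
            show hh gx (gx.1.1 • cq) = Hh gx (((gx.1.1)⁻¹)⁻¹ • cq)
            rw [inv_inv]
  -- the state inequality : φ (Gel y) y is at least the infimum of G y
  have hbdd : ∀ y, BddBelow (Set.range (G y)) := by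
    intro y
    refine ⟨-((Fintype.card ({g // g ∈ E} × {x // x ∈ F}) : ℝ) * (2 * ‖f‖)), ?_⟩
    rintro r ⟨a, rfl⟩
    have := hGb y a
    rw [abs_le] at this
    exact this.1
  have hstate : ∀ y, (⨅ a, G y a) ≤ φ (Gel y) y := by
    intro y
    set b := ⨅ a, G y a with hb
    have hW : ∀ a, (0:ℝ) ≤ (Gel y - b • 1) a := by
      intro a
      rw [lp.coeFn_sub, Pi.sub_apply, lp.coeFn_smul, Pi.smul_apply]
      have h1 : (1 : lp (fun _ : Γ ⧸ Λ => ℝ) ⊤) a = 1 := by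
        rw [show ⇑(1 : lp (fun _ : Γ ⧸ Λ => ℝ) ⊤) = fun _ => (1:ℝ) from lp.infty_coeFn_one]
      rw [h1]
      have h2 : b ≤ G y a := ciInf_le (hbdd y) a
      show 0 ≤ Gel y a - b • (1:ℝ)
      simp only [smul_eq_mul, mul_one]
      have h3 : Gel y a = G y a := rfl
      linarith [h2, h3 ▸ h2]
    have hpos := hφpos _ hW y
    rw [map_sub, map_smul, hφ1] at hpos
    rw [lp.coeFn_sub, Pi.sub_apply, lp.coeFn_smul, Pi.smul_apply] at hpos
    have h1 : (1 : lp (fun _ : S => ℝ) ⊤) y = 1 := by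
      rw [show ⇑(1 : lp (fun _ : S => ℝ) ⊤) = fun _ => (1:ℝ) from lp.infty_coeFn_one]
    rw [h1] at hpos
    simp only [smul_eq_mul, mul_one] at hpos
    linarith
  -- choose near-minimizers and conclude
  set δ : ℝ := u / (2 * ((F'.card : ℝ) + 1)) with hδdef
  have hδ : 0 < δ := by
    rw [hδdef]
    have hcnn : (0:ℝ) ≤ (F'.card : ℝ) := Nat.cast_nonneg _
    exact div_pos hu0 (by linarith)
  have hchoice : ∀ y : S, ∃ a : Γ ⧸ Λ, G y a < (⨅ a, G y a) + δ := by
    intro y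
    refine exists_lt_of_ciInf_lt ?_
    linarith [hδ]
  choose cy hcy using hchoice
  have h1 : u < f (P cy) := hub' cy
  rw [← hregroup cy] at h1
  have h2 : ∑ y ∈ F', G y (cy y) ≤ ∑ y ∈ F', (φ (Gel y) y + δ) := by
    refine Finset.sum_le_sum fun y _ => ?_
    have := hcy y
    have := hstate y
    linarith
  rw [Finset.sum_add_distrib, hzero, zero_add, Finset.sum_const, nsmul_eq_mul] at h2
  have h3 : (F'.card : ℝ) * δ ≤ u / 2 := by
    have hcnn2 : (0:ℝ) ≤ (F'.card : ℝ) := Nat.cast_nonneg _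
    have hc1 : (0:ℝ) < (F'.card : ℝ) + 1 := by linarith
    have h4 : ((F'.card : ℝ) + 1) * δ = u / 2 := by
      rw [hδdef]
      exact aux_div u _ (ne_of_gt hc1)
    exact aux_final u _ δ hδ.le h4
  linarith

/-- a discrete `Γ`-set `S` is `(Γ,Λ)`-amenable (approximately invariant maps
`S → Prob(Γ/Λ)`, uniformly on finite sets) iff there is a unital positive `Γ`-equivariant
linear map `φ : ℓ^∞(Γ/Λ) → ℓ^∞(S)`. -/
theorem stmt6 {Γ S : Type*} [Group Γ] [MulAction Γ S] (Λ : Subgroup Γ) :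
    (∀ ε > (0 : ℝ), ∀ (E : Finset Γ) (F : Finset S),
      ∃ μ : S → (Γ ⧸ Λ) → ℝ, (∀ x, IsProbVec (μ x)) ∧
        ∀ g ∈ E, ∀ x ∈ F, ∑' c : Γ ⧸ Λ, |μ x (g⁻¹ • c) - μ (g • x) c| < ε) ↔
    (∃ φ : lp (fun _ : Γ ⧸ Λ => ℝ) ⊤ →ₗ[ℝ] lp (fun _ : S => ℝ) ⊤,
      φ 1 = 1 ∧
      (∀ f : lp (fun _ : Γ ⧸ Λ => ℝ) ⊤, (∀ c, 0 ≤ f c) → ∀ x, 0 ≤ φ f x) ∧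
      (∀ (g : Γ) (f f' : lp (fun _ : Γ ⧸ Λ => ℝ) ⊤),
        (∀ c, f' c = f (g⁻¹ • c)) → ∀ x : S, φ f' x = φ f (g⁻¹ • x))) := by
  exact ⟨fun h => fwd Λ h, fun h => bwd Λ h⟩
end

section
/- Let Γ be a group with subgroups Λ₁ ≤ Λ₂ ≤ Γ. Let X be a compact Hausdorff Γ-space that is (Γ,Λ₂)-amenable and (Λ₂,Λ₁)-amenable. Then X is (Γ,Λ₁)-amenable. -/
/-! Put `μ(x) = ∑ₐ η(x)(a) · σ(a)·ν(σ(a)⁻¹ x)` with `σ = Quotient.out : Γ ⧸ Λ₂ → Γ`.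
Under `Γ ⧸ Λ₁ ≃ Γ ⧸ Λ₂ × Λ₂ ⧸ Λ₁`, `g` acts by `(a, d) ↦ (g a, u(g, a) d)` with the cocycle
`u(g, a) = σ(g a)⁻¹ g σ(a) ∈ Λ₂`, so `‖μ(x) − g⁻¹μ(g x)‖₁` is at most `‖η(x) − g⁻¹η(g x)‖₁`
plus the `η(x)`-average over `a` of `‖ν(y) − u⁻¹ν(u y)‖₁`, `y = σ(a)⁻¹ x`, `u = u(g, a)`.
By compactness all `η(x)` put mass `> 1 − δ` on one finite set `S`, so `ν` only has to be almost
invariant under the finitely many `u(g, a)` with `g ∈ E`, `a ∈ S`; the rest costs at most `2δ`. -/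

/-- A `Γ`-space `X` is `(Γ,Λ)`-amenable: for every `ε > 0` and finite `E ⊆ Γ` there is a
continuous (pointwise on each coset) map `μ : X → Prob(Γ/Λ)` with
`sup_x ‖g·μ(x) − μ(g x)‖₁ ≤ ε` for `g ∈ E`. -/
def RelAmenable (Γ : Type*) [Group Γ] (X : Type*) [TopologicalSpace X] [MulAction Γ X]
    (Λ : Subgroup Γ) : Prop :=
  ∀ ε > (0 : ℝ), ∀ E : Finset Γ,
    ∃ μ : X → (Γ ⧸ Λ) → ℝ,
      (∀ x c, 0 ≤ μ x c) ∧ (∀ x, ∑' c : Γ ⧸ Λ, μ x c = 1) ∧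
      (∀ c, Continuous fun x => μ x c) ∧
      ∀ g ∈ E, ∀ x : X, ∑' c : Γ ⧸ Λ, |μ x (g⁻¹ • c) - μ (g • x) c| < ε

structure IsProbVec_s8 {ι : Type*} (p : ι → ℝ) : Prop where
  nonneg : ∀ i, 0 ≤ p i
  tsum_eq_one : ∑' i, p i = 1

namespace IsProbVec_s8

variable {ι κ : Type*} {p q : ι → ℝ}

theorem summable_s8 (hp : IsProbVec_s8 p) : Summable p := by
  by_contra h
  simpa [tsum_eq_zero_of_not_summable h] using hp.tsum_eq_one

theorem comp_equiv (hp : IsProbVec_s8 p) (e : κ ≃ ι) : IsProbVec_s8 (p ∘ e) :=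
  ⟨fun _ => hp.nonneg _, (e.tsum_eq p).trans hp.tsum_eq_one⟩

theorem comp_smul {G : Type*} [Group G] [MulAction G ι] (hp : IsProbVec_s8 p) (g : G) :
    IsProbVec_s8 fun i => p (g • i) :=
  hp.comp_equiv (MulAction.toPerm g)

theorem summable_abs_sub (hp : IsProbVec_s8 p) (hq : IsProbVec_s8 q) :
    Summable fun i => |p i - q i| :=
  (hp.summable_s8.sub hq.summable_s8).abs

theorem tsum_abs_sub_le_two (hp : IsProbVec_s8 p) (hq : IsProbVec_s8 q) :
    ∑' i, |p i - q i| ≤ 2 :=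
  calc ∑' i, |p i - q i| ≤ ∑' i, (p i + q i) :=
        (hp.summable_abs_sub hq).tsum_le_tsum
          (fun i => abs_sub_le_iff.2 ⟨by linarith [hq.nonneg i], by linarith [hp.nonneg i]⟩)
          (hp.summable_s8.add hq.summable_s8)
    _ = 2 := by rw [hp.summable_s8.tsum_add hq.summable_s8, hp.tsum_eq_one, hq.tsum_eq_one]; norm_num

theorem prod_mul {D : Type*} {P : ι → D → ℝ} (hp : IsProbVec_s8 p) (hP : ∀ i, IsProbVec_s8 (P i)) :
    IsProbVec_s8 fun z : ι × D => p z.1 * P z.1 z.2 := by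
  have hslice : ∀ i, Summable fun d => p i * P i d := fun i => (hP i).summable_s8.mul_left _
  have hfiber : ∀ i, ∑' d, p i * P i d = p i := fun i => by
    rw [tsum_mul_left, (hP i).tsum_eq_one, mul_one]
  have hsum : Summable fun z : ι × D => p z.1 * P z.1 z.2 :=
    (summable_prod_of_nonneg fun z => mul_nonneg (hp.nonneg _) ((hP _).nonneg _)).mpr
      ⟨hslice, by simpa only [hfiber] using hp.summable_s8⟩
  refine ⟨fun z => mul_nonneg (hp.nonneg _) ((hP _).nonneg _), ?_⟩
  rw [hsum.tsum_prod' hslice]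
  simpa only [hfiber] using hp.tsum_eq_one

theorem tsum_mul_le {D : ι → ℝ} (hq : IsProbVec_s8 q) {S : Finset ι}
    {ε δ M : ℝ} (hS : 1 - δ < ∑ i ∈ S, q i) (hε : 0 ≤ ε) (hD0 : ∀ i, 0 ≤ D i)
    (hDM : ∀ i, D i ≤ M) (hDS : ∀ i ∈ S, D i ≤ ε) :
    ∑' i, q i * D i ≤ ε + M * δ := by
  have : Nonempty ι := by
    by_contra h
    simpa [not_nonempty_iff.mp h] using hq.tsum_eq_one
  have hM : 0 ≤ M := (hD0 Classical.ofNonempty).trans (hDM _)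
  have hqD : Summable fun i => q i * D i :=
    Summable.of_nonneg_of_le (fun i => mul_nonneg (hq.nonneg i) (hD0 i))
      (fun i => mul_le_mul_of_nonneg_left (hDM i) (hq.nonneg i)) (hq.summable_s8.mul_right M)
  have hhead : ∑ i ∈ S, q i * D i ≤ ε * ∑ i ∈ S, q i := by
    rw [Finset.mul_sum]
    exact Finset.sum_le_sum fun i hi => by
      rw [mul_comm ε]; exact mul_le_mul_of_nonneg_left (hDS i hi) (hq.nonneg i)
  have htail : ∑' i : {i // i ∉ S}, q i * D i ≤ M * ∑' i : {i // i ∉ S}, q i := by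
    rw [← tsum_mul_left]
    exact (hqD.subtype _).tsum_le_tsum (fun i => by
      rw [mul_comm M]; exact mul_le_mul_of_nonneg_left (hDM i) (hq.nonneg i))
      ((hq.summable_s8.subtype _).mul_left M)
  have hcompl : ∑' i : {i // i ∉ S}, q i = 1 - ∑ i ∈ S, q i := by
    linarith [hq.summable_s8.sum_add_tsum_subtype_compl S, hq.tsum_eq_one]
  have hSle : ∑ i ∈ S, q i ≤ 1 :=
    hq.tsum_eq_one ▸ hq.summable_s8.sum_le_tsum S fun i _ => hq.nonneg i
  calc ∑' i, q i * D i = ∑ i ∈ S, q i * D i + ∑' i : {i // i ∉ S}, q i * D i :=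
        (hqD.sum_add_tsum_subtype_compl S).symm
    _ ≤ ε * ∑ i ∈ S, q i + M * (1 - ∑ i ∈ S, q i) := hcompl ▸ add_le_add hhead htail
    _ ≤ ε + M * δ := by nlinarith

end IsProbVec_s8

theorem abs_mul_sub_mul_le_of_nonneg {a b c d : ℝ} (ha : 0 ≤ a) (hd : 0 ≤ d) :
    |a * b - c * d| ≤ |a - c| * d + a * |b - d| :=
  calc |a * b - c * d| = |(a - c) * d + a * (b - d)| := by ring_nf
    _ ≤ |(a - c) * d| + |a * (b - d)| := abs_add_le _ _
    _ = |a - c| * d + a * |b - d| := by rw [abs_mul, abs_mul, abs_of_nonneg hd, abs_of_nonneg ha]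

theorem tsum_abs_mixture_sub_le {ι D : Type*} {p q : ι → ℝ} {P R : ι → D → ℝ}
    (hp : IsProbVec_s8 p) (hq : IsProbVec_s8 q) (hP : ∀ i, IsProbVec_s8 (P i)) (hR : ∀ i, IsProbVec_s8 (R i)) :
    ∑' z : ι × D, |p z.1 * P z.1 z.2 - q z.1 * R z.1 z.2| ≤
      ∑' i, |p i - q i| + ∑' i, p i * ∑' d, |P i d - R i d| := by
  have hsum : Summable fun z : ι × D => |p z.1 * P z.1 z.2 - q z.1 * R z.1 z.2| :=
    ((hp.prod_mul hP).summable_abs_sub (hq.prod_mul hR))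
  obtain ⟨hslice, hmarg⟩ := (summable_prod_of_nonneg fun _ => abs_nonneg _).mp hsum
  have hcomp : Summable fun i => p i * ∑' d, |P i d - R i d| :=
    Summable.of_nonneg_of_le
      (fun i => mul_nonneg (hp.nonneg i) (tsum_nonneg fun _ => abs_nonneg _))
      (fun i => mul_le_mul_of_nonneg_left ((hP i).tsum_abs_sub_le_two (hR i)) (hp.nonneg i))
      (hp.summable_s8.mul_right 2)
  have hfiber : ∀ i, ∑' d, |p i * P i d - q i * R i d| ≤
      |p i - q i| + p i * ∑' d, |P i d - R i d| := fun i => by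
    calc ∑' d, |p i * P i d - q i * R i d|
        ≤ ∑' d, (|p i - q i| * R i d + p i * |P i d - R i d|) :=
          (hslice i).tsum_le_tsum
            (fun d => abs_mul_sub_mul_le_of_nonneg (hp.nonneg i) ((hR i).nonneg d))
            (((hR i).summable_s8.mul_left _).add (((hP i).summable_abs_sub (hR i)).mul_left _))
      _ = |p i - q i| + p i * ∑' d, |P i d - R i d| := by
          rw [((hR i).summable_s8.mul_left _).tsum_add (((hP i).summable_abs_sub (hR i)).mul_left _),
            tsum_mul_left, tsum_mul_left, (hR i).tsum_eq_one, mul_one]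
  calc ∑' z : ι × D, |p z.1 * P z.1 z.2 - q z.1 * R z.1 z.2|
      = ∑' i, ∑' d, |p i * P i d - q i * R i d| := hsum.tsum_prod' hslice
    _ ≤ ∑' i, (|p i - q i| + p i * ∑' d, |P i d - R i d|) :=
        hmarg.tsum_le_tsum hfiber ((hp.summable_abs_sub hq).add hcomp)
    _ = ∑' i, |p i - q i| + ∑' i, p i * ∑' d, |P i d - R i d| :=
        (hp.summable_abs_sub hq).tsum_add hcomp

theorem exists_finset_forall_one_sub_lt_sum {X ι : Type*} [TopologicalSpace X] [CompactSpace X]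
    {η : X → ι → ℝ} (hη : ∀ x, IsProbVec_s8 (η x)) (hc : ∀ i, Continuous fun x => η x i)
    {δ : ℝ} (hδ : 0 < δ) : ∃ S : Finset ι, ∀ x, 1 - δ < ∑ i ∈ S, η x i := by
  have hcover : ∀ x, ∃ S : Finset ι, 1 - δ < ∑ i ∈ S, η x i := fun x => by
    refine ((hη x).summable_s8.hasSum.eventually (eventually_gt_nhds ?_)).exists
    rw [(hη x).tsum_eq_one]
    linarith
  obtain ⟨S, hS⟩ := isCompact_univ.elim_directed_cover
    (fun S : Finset ι => {x | 1 - δ < ∑ i ∈ S, η x i})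
    (fun S => isOpen_lt continuous_const (continuous_finsetSum S fun i _ => hc i))
    (fun x _ => Set.mem_iUnion.mpr (hcover x))
    (Monotone.directed_le fun S T hST x hx =>
      hx.trans_le (Finset.sum_le_sum_of_subset_of_nonneg hST fun i _ _ => (hη x).nonneg i))
  exact ⟨S, fun x => hS (Set.mem_univ x)⟩

theorem tsum_abs_inv_smul_sub {G α : Type*} [Group G] [MulAction G α] (g : G) (p q : α → ℝ) :
    ∑' c, |p (g⁻¹ • c) - q c| = ∑' c, |p c - q (g • c)| := by
  rw [← (MulAction.toPerm g).tsum_eq]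
  simp only [MulAction.toPerm_apply, inv_smul_smul]

section CosetInduction

variable {Γ : Type*} [Group Γ]

noncomputable def Subgroup.outCocycle (Λ : Subgroup Γ) (g : Γ) (a : Γ ⧸ Λ) : Λ :=
  ⟨(g • a).out⁻¹ * (g * a.out), QuotientGroup.eq.mp <| by
    rw [QuotientGroup.out_eq']
    nth_rw 1 [← QuotientGroup.out_eq' a]
    rfl⟩

theorem Subgroup.smul_quotientEquivProdOfLE_symm {Λ₁ Λ₂ : Subgroup Γ} (h12 : Λ₁ ≤ Λ₂) (g : Γ)
    (a : Γ ⧸ Λ₂) (d : Λ₂ ⧸ Λ₁.subgroupOf Λ₂) :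
    g • (quotientEquivProdOfLE h12).symm (a, d) =
      (quotientEquivProdOfLE h12).symm (g • a, Λ₂.outCocycle g a • d) := by
  induction d using QuotientGroup.induction_on with
  | H h =>
    change ((g * (a.out * h) : Γ) : Γ ⧸ Λ₁) = (((g • a).out * (Λ₂.outCocycle g a * h) : Γ) : Γ ⧸ Λ₁)
    simp only [outCocycle, mul_inv_cancel_left, mul_assoc]

theorem Subgroup.outCocycle_smul {X : Type*} [MulAction Γ X] (Λ : Subgroup Γ) (g : Γ)
    (a : Γ ⧸ Λ) (x : X) : Λ.outCocycle g a • a.out⁻¹ • x = (g • a).out⁻¹ • g • x := by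
  rw [Subgroup.smul_def, smul_smul, smul_smul, outCocycle]
  simp only [mul_assoc, mul_inv_cancel, mul_one]

variable {X : Type*} [MulAction Γ X] {Λ₁ Λ₂ : Subgroup Γ} (h12 : Λ₁ ≤ Λ₂)
  (η : X → Γ ⧸ Λ₂ → ℝ) (ν : X → Λ₂ ⧸ Λ₁.subgroupOf Λ₂ → ℝ)

noncomputable def inducedProb (x : X) : Γ ⧸ Λ₁ → ℝ :=
  (fun z => η x z.1 * ν (z.1.out⁻¹ • x) z.2) ∘ Subgroup.quotientEquivProdOfLE h12

theorem inducedProb_symm_apply (x : X) (z : (Γ ⧸ Λ₂) × (Λ₂ ⧸ Λ₁.subgroupOf Λ₂)) :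
    inducedProb h12 η ν x ((Subgroup.quotientEquivProdOfLE h12).symm z) =
      η x z.1 * ν (z.1.out⁻¹ • x) z.2 := by
  rw [inducedProb, Function.comp_apply, Equiv.apply_symm_apply]

variable {η ν}

theorem isProbVec_inducedProb (hη : ∀ x, IsProbVec_s8 (η x)) (hν : ∀ x, IsProbVec_s8 (ν x)) (x : X) :
    IsProbVec_s8 (inducedProb h12 η ν x) :=
  ((hη x).prod_mul fun a => hν (a.out⁻¹ • x)).comp_equiv _

theorem continuous_inducedProb [TopologicalSpace X] (hcont : ∀ g : Γ, Continuous fun x : X => g • x)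
    (hη : ∀ a, Continuous fun x => η x a) (hν : ∀ d, Continuous fun x => ν x d) (c : Γ ⧸ Λ₁) :
    Continuous fun x => inducedProb h12 η ν x c :=
  (hη _).mul ((hν _).comp (hcont _))

theorem tsum_abs_inducedProb_sub_le (hη : ∀ x, IsProbVec_s8 (η x)) (hν : ∀ x, IsProbVec_s8 (ν x))
    (g : Γ) (x : X) :
    ∑' c, |inducedProb h12 η ν x c - inducedProb h12 η ν (g • x) (g • c)| ≤
      ∑' a, |η x a - η (g • x) (g • a)| +
        ∑' a, η x a * ∑' d, |ν (a.out⁻¹ • x) d -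
          ν (Λ₂.outCocycle g a • a.out⁻¹ • x) (Λ₂.outCocycle g a • d)| := by
  rw [← (Subgroup.quotientEquivProdOfLE h12).symm.tsum_eq]
  have hsummand : ∀ z : (Γ ⧸ Λ₂) × (Λ₂ ⧸ Λ₁.subgroupOf Λ₂),
      inducedProb h12 η ν (g • x) (g • (Subgroup.quotientEquivProdOfLE h12).symm z) =
        η (g • x) (g • z.1) *
          ν (Λ₂.outCocycle g z.1 • z.1.out⁻¹ • x) (Λ₂.outCocycle g z.1 • z.2) := by
    rintro ⟨a, d⟩
    rw [Subgroup.smul_quotientEquivProdOfLE_symm, inducedProb_symm_apply,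
      Subgroup.outCocycle_smul]
  simp only [hsummand, inducedProb_symm_apply]
  exact tsum_abs_mixture_sub_le (hη x) ((hη (g • x)).comp_smul g) (fun a => hν (a.out⁻¹ • x))
    (fun a => (hν (Λ₂.outCocycle g a • a.out⁻¹ • x)).comp_smul (Λ₂.outCocycle g a))

end CosetInduction

theorem stmt8_general {Γ : Type*} [Group Γ] (Λ₁ Λ₂ : Subgroup Γ) (h12 : Λ₁ ≤ Λ₂)
    (X : Type*) [TopologicalSpace X] [CompactSpace X] [MulAction Γ X]
    (hcont : ∀ g : Γ, Continuous fun x : X => g • x)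
    (h2 : RelAmenable Γ X Λ₂)
    (h1 : RelAmenable (↥Λ₂) X (Λ₁.subgroupOf Λ₂)) :
    RelAmenable Γ X Λ₁ := by
  classical
  intro ε hε E
  obtain ⟨η, hη0, hη1, hηc, hηE⟩ := h2 (ε / 3) (by positivity) E
  have hη : ∀ x, IsProbVec_s8 (η x) := fun x => ⟨hη0 x, hη1 x⟩
  obtain ⟨S, hS⟩ := exists_finset_forall_one_sub_lt_sum hη hηc (δ := ε / 12) (by positivity)
  obtain ⟨ν, hν0, hν1, hνc, hνF⟩ :=
    h1 (ε / 3) (by positivity) ((E ×ˢ S).image fun p => Λ₂.outCocycle p.1 p.2)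
  have hν : ∀ x, IsProbVec_s8 (ν x) := fun x => ⟨hν0 x, hν1 x⟩
  refine ⟨inducedProb h12 η ν, fun x => (isProbVec_inducedProb h12 hη hν x).nonneg,
    fun x => (isProbVec_inducedProb h12 hη hν x).tsum_eq_one,
    continuous_inducedProb h12 hcont hηc hνc, fun g hg x => ?_⟩
  have hfar : ∑' a, |η x a - η (g • x) (g • a)| < ε / 3 :=
    tsum_abs_inv_smul_sub g (η x) (η (g • x)) ▸ hηE g hg x
  have hnear : ∀ a ∈ S, ∑' d, |ν (a.out⁻¹ • x) d -
      ν (Λ₂.outCocycle g a • a.out⁻¹ • x) (Λ₂.outCocycle g a • d)| ≤ ε / 3 := fun a ha => by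
    rw [← tsum_abs_inv_smul_sub (Λ₂.outCocycle g a) (ν (a.out⁻¹ • x))]
    have hmem : Λ₂.outCocycle g a ∈ (E ×ˢ S).image fun p => Λ₂.outCocycle p.1 p.2 :=
      Finset.mem_image.mpr ⟨(g, a), Finset.mem_product.mpr ⟨hg, ha⟩, rfl⟩
    exact (hνF _ hmem _).le
  have hmean := (hη x).tsum_mul_le (hS x) (by positivity)
    (fun _ => tsum_nonneg fun _ => abs_nonneg _)
    (fun a => (hν _).tsum_abs_sub_le_two ((hν _).comp_smul (Λ₂.outCocycle g a))) hnear
  rw [tsum_abs_inv_smul_sub]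
  linarith [tsum_abs_inducedProb_sub_le h12 hη hν g x]

/-- for `Λ₁ ≤ Λ₂ ≤ Γ` and a compact Hausdorff `Γ`-space `X`, if `X` is
`(Γ,Λ₂)`-amenable and `(Λ₂,Λ₁)`-amenable then `X` is `(Γ,Λ₁)`-amenable. -/
theorem stmt8 {Γ : Type*} [Group Γ] (Λ₁ Λ₂ : Subgroup Γ) (h12 : Λ₁ ≤ Λ₂)
    (X : Type*) [TopologicalSpace X] [CompactSpace X] [T2Space X] [MulAction Γ X]
    (hcont : ∀ g : Γ, Continuous fun x : X => g • x)
    (h2 : RelAmenable Γ X Λ₂)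
    (h1 : RelAmenable (↥Λ₂) X (Λ₁.subgroupOf Λ₂)) :
    RelAmenable Γ X Λ₁ :=
  stmt8_general Λ₁ Λ₂ h12 X hcont h2 h1
end
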